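/- arXiv:2407.15737 — 9 statements merged into one kernel-verified Lean document; each statement's English description precedes it below -/
import Mathlib

section
/- Assume max_{j∈J} p_j > 0 (so C > 0). If β* is a partition of J into M (possibly empty) bags that minimizes the expected makespan ∑_{m=1}^M q_m · Opt_max(β, m) over all such partitions, then every bag B of β* has size p(B) ≤ 4C; in other words, no optimal solution uses a bag of size greater than 4C. -/
open scoped BigOperators

attribute [local instance] Classical.propDecidable

/-- The load of machine `i` under the assignment `σ` of items (with sizes `sz`) to `m` machines. -/
noncomputable def load {ι : Type*} [Fintype ι] {m : ℕ} (sz : ι → ℝ) (σ : ι → Fin m)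
    (i : Fin m) : ℝ :=
  ∑ b : ι, if σ b = i then sz b else 0

/-- The optimal makespan (minimum over all assignments of the maximum machine load)
for items with sizes `sz` on `m` identical machines. -/
noncomputable def optMax {ι : Type*} [Fintype ι] (sz : ι → ℝ) (m : ℕ) : ℝ :=
  ⨅ σ : ι → Fin m, ⨆ i : Fin m, load sz σ i

/-- The size of bag `b` for the partition `β` of the jobs into bags. -/
noncomputable def bagSize {n : ℕ} {ι : Type*} (p : Fin n → ℝ) (β : Fin n → ι) (b : ι) : ℝ :=
  ∑ j : Fin n, if β j = b then p j else 0

/-- The quantity `C = ∑_{m=1}^M q_m · max (max_j p_j) ((∑_j p_j)/m)`,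
where scenario `i : Fin M` corresponds to `m = i+1` machines. -/
noncomputable def Cval {n M : ℕ} (p : Fin n → ℝ) (q : Fin M → ℝ) : ℝ :=
  ∑ i : Fin M, q i * max (⨆ j : Fin n, p j) ((∑ j : Fin n, p j) / ((i.1 + 1 : ℕ) : ℝ))

lemma bagSize_eq_load {n M : ℕ} (p : Fin n → ℝ) (β : Fin n → Fin M) (b : Fin M) :
    bagSize p β b = load p β b := by
  unfold bagSize load
  refine Finset.sum_congr rfl fun j _ => ?_
  by_cases h : β j = b
  · rw [if_pos h, if_pos h]
  · rw [if_neg h, if_neg h]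

lemma load_nonneg {ι : Type*} [Fintype ι] {m : ℕ} (sz : ι → ℝ) (hsz : ∀ b, 0 ≤ sz b)
    (σ : ι → Fin m) (i : Fin m) : 0 ≤ load sz σ i :=
  Finset.sum_nonneg fun b _ => by by_cases h : σ b = i <;> simp [h, hsz b]

lemma le_optMax {ι : Type*} [Fintype ι] {m : ℕ} (hm : 0 < m) (sz : ι → ℝ)
    (hsz : ∀ b, 0 ≤ sz b) (b : ι) : sz b ≤ optMax sz m := by
  have : Nonempty (Fin m) := ⟨⟨0, hm⟩⟩
  refine le_ciInf fun σ => ?_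
  have h1 : sz b ≤ load sz σ (σ b) := by
    have := Finset.single_le_sum (f := fun c => if σ c = σ b then sz c else 0)
      (fun c _ => by by_cases h : σ c = σ b <;> simp [h, hsz c]) (Finset.mem_univ b)
    simpa [load] using this
  exact h1.trans (le_ciSup (Set.finite_range _).bddAbove (σ b))

lemma optMax_le {ι : Type*} [Fintype ι] {m : ℕ} (hm : 0 < m) (sz : ι → ℝ)
    (hsz : ∀ b, 0 ≤ sz b) {T : ℝ} (σ : ι → Fin m) (h : ∀ i, load sz σ i ≤ T) :
    optMax sz m ≤ T := by
  have : Nonempty (Fin m) := ⟨⟨0, hm⟩⟩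
  have hbdd : BddBelow (Set.range fun τ : ι → Fin m => ⨆ i, load sz τ i) := by
    refine ⟨0, ?_⟩
    rintro x ⟨τ, rfl⟩
    exact le_trans (load_nonneg sz hsz τ (Classical.arbitrary _))
      (le_ciSup (Set.finite_range _).bddAbove _)
  exact ciInf_le_of_le hbdd σ (ciSup_le h)

lemma greedy {ι : Type*} [Fintype ι] {m : ℕ} (hm : 0 < m) (sz : ι → ℝ)
    (hsz : ∀ b, 0 ≤ sz b) {T : ℝ} (hT0 : 0 ≤ T) (hT : ∀ b, sz b ≤ T) :
    ∃ σ : ι → Fin m, ∀ i, load sz σ i ≤ (∑ b, sz b) / m + T := by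
  have hm' : (0:ℝ) < m := by exact_mod_cast hm
  have : Nonempty (Fin m) := ⟨⟨0, hm⟩⟩
  suffices h : ∀ s : Finset ι, ∃ σ : ι → Fin m,
      ∀ i, (∑ b ∈ s, if σ b = i then sz b else 0) ≤ (∑ b ∈ s, sz b) / m + T by
    obtain ⟨σ, hσ⟩ := h Finset.univ
    exact ⟨σ, fun i => hσ i⟩
  intro s
  induction s using Finset.induction_on with
  | empty =>
    refine ⟨fun _ => ⟨0, hm⟩, fun i => ?_⟩
    simp [hT0]
  | @insert a s ha ih =>
    obtain ⟨σ, hσ⟩ := ih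
    obtain ⟨i₀, -, hi₀⟩ : ∃ i₀ ∈ Finset.univ,
        (∑ b ∈ s, if σ b = i₀ then sz b else 0) ≤ (∑ b ∈ s, sz b) / m := by
      apply Finset.exists_le_of_sum_le Finset.univ_nonempty
      have h1 : ∑ i : Fin m, (∑ b ∈ s, if σ b = i then sz b else 0) = ∑ b ∈ s, sz b := by
        rw [Finset.sum_comm]
        exact Finset.sum_congr rfl fun b _ => by simp
      rw [h1, Finset.sum_const, Finset.card_univ, Fintype.card_fin, nsmul_eq_mul]
      rw [mul_div_cancel₀ _ (ne_of_gt hm')]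
    refine ⟨Function.update σ a i₀, fun i => ?_⟩
    have hsame : ∀ b ∈ s, (if Function.update σ a i₀ b = i then sz b else 0)
        = (if σ b = i then sz b else 0) := by
      intro b hb
      rw [Function.update_of_ne (ne_of_mem_of_not_mem hb ha)]
    rw [Finset.sum_insert ha, Finset.sum_insert ha, Finset.sum_congr rfl hsame]
    rw [Function.update_self]
    have hmono : (∑ b ∈ s, sz b) / m ≤ (sz a + ∑ b ∈ s, sz b) / m := by
      gcongr
      linarith [hsz a]
    by_cases hcase : i₀ = i
    · subst hcase
      rw [if_pos rfl]
      have hdiv : 0 ≤ sz a / m := div_nonneg (hsz a) hm'.le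
      have h5 : (sz a + ∑ b ∈ s, sz b) / m = sz a / m + (∑ b ∈ s, sz b) / m :=
        add_div _ _ _
      linarith [hi₀, hT a]
    · rw [if_neg hcase, zero_add]
      exact (hσ i).trans (by linarith)

/-- total size of all bags equals total size of all jobs -/
lemma sum_bagSize {n M : ℕ} (p : Fin n → ℝ) (β : Fin n → Fin M) :
    ∑ b, bagSize p β b = ∑ j, p j := by
  unfold bagSize
  rw [Finset.sum_comm]
  refine Finset.sum_congr rfl fun j _ => ?_
  refine (Finset.sum_eq_single (β j) ?_ ?_).trans (if_pos rfl)
  · intro b _ hb; exact if_neg fun h => hb h.symm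
  · intro h; exact absurd (Finset.mem_univ _) h

lemma bagSize_nonneg {n M : ℕ} (p : Fin n → ℝ) (hp : ∀ j, 0 ≤ p j) (β : Fin n → Fin M)
    (b : Fin M) : 0 ≤ bagSize p β b :=
  Finset.sum_nonneg fun j _ => by by_cases h : β j = b <;> simp [h, hp j]

/-- if `β*` minimizes the expected makespan over all partitions of the
jobs into `M` bags, then every bag of `β*` has size at most `4C`. -/
theorem stmt1 (n M : ℕ) (hM : 1 ≤ M)
    (p : Fin n → ℝ) (hp : ∀ j, 0 ≤ p j) (hpmax : 0 < ⨆ j : Fin n, p j)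
    (q : Fin M → ℝ) (hq : ∀ i, 0 ≤ q i) (hq1 : ∑ i, q i = 1)
    (βopt : Fin n → Fin M)
    (hopt : ∀ β : Fin n → Fin M,
      ∑ i : Fin M, q i * optMax (bagSize p βopt) (i.1 + 1) ≤
        ∑ i : Fin M, q i * optMax (bagSize p β) (i.1 + 1)) :
    ∀ b : Fin M, bagSize p βopt b ≤ 4 * Cval p q := by
  intro b
  set pmax := ⨆ j : Fin n, p j with hpmaxdef
  set P := ∑ j : Fin n, p j with hPdef
  have hP0 : 0 ≤ P := Finset.sum_nonneg fun j _ => hp j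
  have hpm0 : 0 ≤ pmax := le_of_lt hpmax
  have hMpos : (0:ℝ) < M := by exact_mod_cast hM
  have hple : ∀ j, p j ≤ pmax := by
    intro j
    exact le_ciSup (Set.finite_range p).bddAbove j
  -- greedy partition of jobs into M bags
  obtain ⟨β₀, hβ₀⟩ := greedy (ι := Fin n) (m := M) hM p hp hpm0 hple
  have hβ₀' : ∀ bb : Fin M, bagSize p β₀ bb ≤ P / M + pmax := by
    intro bb
    have h := hβ₀ bb
    rw [hPdef, bagSize_eq_load]
    exact h
  have hT0 : 0 ≤ P / M + pmax := by positivity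
  -- bound optMax of β₀ for each number of machines
  have hub : ∀ i : Fin M,
      optMax (bagSize p β₀) (i.1 + 1) ≤ 4 * max pmax (P / ((i.1 + 1 : ℕ) : ℝ)) := by
    intro i
    have him : (0:ℝ) < ((i.1 + 1 : ℕ) : ℝ) := by positivity
    obtain ⟨τ, hτ⟩ := greedy (ι := Fin M) (m := i.1 + 1) (Nat.succ_pos _)
      (bagSize p β₀) (bagSize_nonneg p hp β₀) hT0 hβ₀'
    have hopt_le : optMax (bagSize p β₀) (i.1 + 1)
        ≤ (∑ bb, bagSize p β₀ bb) / ((i.1 + 1 : ℕ) : ℝ) + (P / M + pmax) :=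
      optMax_le (Nat.succ_pos _) _ (bagSize_nonneg p hp β₀) τ hτ
    rw [sum_bagSize] at hopt_le
    have h1 : P / ((i.1 + 1 : ℕ) : ℝ) ≤ max pmax (P / ((i.1 + 1 : ℕ) : ℝ)) := le_max_right _ _
    have h2 : P / M ≤ P / ((i.1 + 1 : ℕ) : ℝ) := by
      apply div_le_div_of_nonneg_left hP0 him
      exact_mod_cast i.2
    have h3 : pmax ≤ max pmax (P / ((i.1 + 1 : ℕ) : ℝ)) := le_max_left _ _
    have h4 : 0 ≤ max pmax (P / ((i.1 + 1 : ℕ) : ℝ)) := le_trans hpm0 h3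
    calc optMax (bagSize p β₀) (i.1 + 1)
        ≤ P / ((i.1 + 1 : ℕ) : ℝ) + (P / M + pmax) := hopt_le
      _ ≤ 4 * max pmax (P / ((i.1 + 1 : ℕ) : ℝ)) := by linarith
  -- lower bound: bag size ≤ expected makespan of βopt
  have hlb : bagSize p βopt b ≤ ∑ i : Fin M, q i * optMax (bagSize p βopt) (i.1 + 1) := by
    calc bagSize p βopt b = (∑ i : Fin M, q i) * bagSize p βopt b := by rw [hq1, one_mul]
      _ = ∑ i : Fin M, q i * bagSize p βopt b := by rw [Finset.sum_mul]
      _ ≤ ∑ i : Fin M, q i * optMax (bagSize p βopt) (i.1 + 1) := by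
          apply Finset.sum_le_sum
          intro i _
          exact mul_le_mul_of_nonneg_left
            (le_optMax (Nat.succ_pos _) _ (bagSize_nonneg p hp βopt) b) (hq i)
  calc bagSize p βopt b
      ≤ ∑ i : Fin M, q i * optMax (bagSize p βopt) (i.1 + 1) := hlb
    _ ≤ ∑ i : Fin M, q i * optMax (bagSize p β₀) (i.1 + 1) := hopt β₀
    _ ≤ ∑ i : Fin M, q i * (4 * max pmax (P / ((i.1 + 1 : ℕ) : ℝ))) := by
        apply Finset.sum_le_sum
        intro i _
        exact mul_le_mul_of_nonneg_left (hub i) (hq i)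
    _ = 4 * Cval p q := by
        rw [Cval, Finset.mul_sum]
        exact Finset.sum_congr rfl fun i _ => by ring
end

section
/- Let ε ∈ (0,1], assume max_{j∈J} p_j > 0 (so C > 0), and let β be a partition of J into M (possibly empty) bags such that every bag has size p(B) ≤ 4C. Then for every number of machines m ∈ {1,…,M}: Opt_max(M̂, m) ≤ (1+ε)·Opt_max(β, m) + 4εC. -/
open scoped BigOperators

attribute [local instance] Classical.propDecidable

/-- A bag `b` of `β` is regular if its size is at least `εC` or it packs a job of size
at least `ε²C`. -/
def Regular {n M : ℕ} (ε C : ℝ) (p : Fin n → ℝ) (β : Fin n → Fin M) (b : Fin M) : Prop :=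
  ε * C ≤ bagSize p β b ∨ ∃ j, β j = b ∧ ε ^ 2 * C ≤ p j

/-- `L = {⌊log_{1+ε}(ε²C)⌋, …, ⌈log_{1+ε}(4C)⌉}`. -/
noncomputable def Lset (ε C : ℝ) : Finset ℤ :=
  Finset.Icc ⌊Real.log (ε ^ 2 * C) / Real.log (1 + ε)⌋ ⌈Real.log (4 * C) / Real.log (1 + ε)⌉

/-- `M̂_ℓ`: the number of regular bags of `β` with size in `[(1+ε)^ℓ, (1+ε)^{ℓ+1})`. -/
noncomputable def Mhat {n M : ℕ} (ε C : ℝ) (p : Fin n → ℝ) (β : Fin n → Fin M) (ℓ : ℤ) : ℕ :=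
  (Finset.univ.filter (fun b : Fin M =>
    Regular ε C p β b ∧ (1 + ε) ^ ℓ ≤ bagSize p β b ∧ bagSize p β b < (1 + ε) ^ (ℓ + 1))).card

/-- `M̂_sand = ⌈(total size of non-regular bags)/(εC)⌉`. -/
noncomputable def Msand {n M : ℕ} (ε C : ℝ) (p : Fin n → ℝ) (β : Fin n → Fin M) : ℕ :=
  ⌈(∑ b : Fin M, if ¬ Regular ε C p β b then bagSize p β b else 0) / (ε * C)⌉₊

/-- Index type for the collection of items consisting of `M̂_ℓ` items for each `ℓ ∈ L`
together with `M̂_sand` sand items. -/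
def BagIdx {n M : ℕ} (ε C : ℝ) (p : Fin n → ℝ) (β : Fin n → Fin M) : Type :=
  (Σ ℓ : (Lset ε C), Fin (Mhat ε C p β ℓ.1)) ⊕ Fin (Msand ε C p β)

noncomputable instance {n M : ℕ} (ε C : ℝ) (p : Fin n → ℝ) (β : Fin n → Fin M) :
    Fintype (BagIdx ε C p β) := by
  unfold BagIdx; infer_instance

/-- The sizes of the items of the guess `M̂`: each of the `M̂_ℓ` items has size `(1+ε)^{ℓ+1}`
and each of the `M̂_sand` items has size `(1+ε)·εC`. -/
noncomputable def itemSz {n M : ℕ} (ε C : ℝ) (p : Fin n → ℝ) (β : Fin n → Fin M) :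
    BagIdx ε C p β → ℝ :=
  Sum.elim (fun x => (1 + ε) ^ ((x.1.1 : ℤ) + 1)) (fun _ => (1 + ε) * ε * C)

/-! ### Auxiliary lemmas -/

/-- Given capacities `c i` with `N ≤ ∑ i, c i`, there is an assignment of `N` items to the
machines respecting the capacities. -/
lemma exists_fiber_bound (m N : ℕ) (c : Fin m → ℕ) (hN : N ≤ ∑ i, c i) :
    ∃ f : Fin N → Fin m, ∀ i, (Finset.univ.filter (fun k => f k = i)).card ≤ c i := by
  have hcard : Fintype.card (Fin N) ≤ Fintype.card (Σ i : Fin m, Fin (c i)) := by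
    simpa [Fintype.card_sigma] using hN
  obtain ⟨emb⟩ := Function.Embedding.nonempty_of_card_le hcard
  refine ⟨fun k => (emb k).1, fun i => ?_⟩
  have h2 : (Finset.univ.filter (fun x : Σ j : Fin m, Fin (c j) => x.1 = i)).card = c i := by
    rw [← Fintype.card_subtype]
    refine (Fintype.card_congr (Equiv.mk
      (fun x : {x : Σ j : Fin m, Fin (c j) // x.1 = i} => Fin.cast (congrArg c x.2) x.1.2)
      (fun a : Fin (c i) => ⟨⟨i, a⟩, rfl⟩) ?_ (fun a => rfl))).trans (Fintype.card_fin _)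
    rintro ⟨⟨j, a⟩, h⟩
    dsimp only at h; subst h; rfl
  rw [← h2]
  apply Finset.card_le_card_of_injOn emb
  · intro k hk; simp only [Finset.mem_coe, Finset.mem_filter, Finset.mem_univ, true_and] at hk ⊢; exact hk
  · exact fun a _ b _ h => emb.injective h

/-- The bucket of regular bags with size in `[(1+ε)^ℓ, (1+ε)^{ℓ+1})`. -/
noncomputable def Bk {n M : ℕ} (ε C : ℝ) (p : Fin n → ℝ) (β : Fin n → Fin M) (ℓ : ℤ) :
    Finset (Fin M) :=
  Finset.univ.filter (fun b : Fin M =>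
    Regular ε C p β b ∧ (1 + ε) ^ ℓ ≤ bagSize p β b ∧ bagSize p β b < (1 + ε) ^ (ℓ + 1))

lemma Mhat_eq {n M : ℕ} (ε C : ℝ) (p : Fin n → ℝ) (β : Fin n → Fin M) (ℓ : ℤ) :
    Mhat ε C p β ℓ = (Bk ε C p β ℓ).card := rfl

/-- for every `m ∈ {1,…,M}`,
`Opt_max(M̂, m) ≤ (1+ε)·Opt_max(β, m) + 4εC`. -/
theorem stmt3 (n M : ℕ) (hM : 1 ≤ M) (ε : ℝ) (hε0 : 0 < ε) (hε1 : ε ≤ 1)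
    (p : Fin n → ℝ) (hp : ∀ j, 0 ≤ p j) (hpmax : 0 < ⨆ j : Fin n, p j)
    (q : Fin M → ℝ) (hq : ∀ i, 0 ≤ q i) (hq1 : ∑ i, q i = 1)
    (β : Fin n → Fin M) (hβ : ∀ b, bagSize p β b ≤ 4 * Cval p q) :
    ∀ m : ℕ, 1 ≤ m → m ≤ M →
      optMax (itemSz ε (Cval p q) p β) m ≤
        (1 + ε) * optMax (bagSize p β) m + 4 * ε * Cval p q := by
  intro m hm hmM
  haveI : NeZero m := ⟨by omega⟩
  set C := Cval p q with hCdef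
  have hC : 0 < C := by
    have h2 : (⨆ j : Fin n, p j) ≤ C := by
      calc (⨆ j : Fin n, p j) = ∑ i : Fin M, q i * (⨆ j : Fin n, p j) := by
            rw [← Finset.sum_mul, hq1, one_mul]
        _ ≤ C := Finset.sum_le_sum (fun i _ =>
            mul_le_mul_of_nonneg_left (le_max_left _ _) (hq i))
    exact lt_of_lt_of_le hpmax h2
  have hε : (0:ℝ) < 1 + ε := by linarith
  have hεC : (0:ℝ) < ε * C := mul_pos hε0 hC
  have hbag : ∀ b, 0 ≤ bagSize p β b := fun b =>
    Finset.sum_nonneg (fun j _ => by by_cases h : β j = b <;> simp [h, hp j])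
  -- an optimal assignment of the bags
  obtain ⟨σs, hσs⟩ := Finite.exists_min (fun σ : Fin M → Fin m => ⨆ i, load (bagSize p β) σ i)
  have hopt : (⨆ i, load (bagSize p β) σs i) ≤ optMax (bagSize p β) m := le_ciInf hσs
  -- per-machine regular / sand loads
  set RL : Fin m → ℝ := fun i =>
    ∑ b ∈ Finset.univ.filter (fun b => σs b = i ∧ Regular ε C p β b), bagSize p β b with hRL
  set SL : Fin m → ℝ := fun i =>
    ∑ b ∈ Finset.univ.filter (fun b => σs b = i ∧ ¬ Regular ε C p β b), bagSize p β b with hSLdef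
  have hSLnn : ∀ i, 0 ≤ SL i := fun i => Finset.sum_nonneg fun b _ => hbag b
  have hsplit : ∀ i, RL i + SL i = load (bagSize p β) σs i := by
    intro i
    rw [hRL, hSLdef, load, ← Finset.sum_filter]
    rw [← Finset.sum_filter_add_sum_filter_not (Finset.univ.filter (fun b => σs b = i))
      (fun b => Regular ε C p β b) (bagSize p β), Finset.filter_filter, Finset.filter_filter]
  -- the sand assignment
  set c : Fin m → ℕ := fun i => ⌈SL i / (ε * C)⌉₊ with hc
  have hNle : Msand ε C p β ≤ ∑ i, c i := by
    have hSL2 : ∀ i, SL i = ∑ b ∈ Finset.univ.filter (fun b => σs b = i),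
        (if ¬ Regular ε C p β b then bagSize p β b else 0) := by
      intro i
      show (∑ b ∈ Finset.univ.filter (fun b => σs b = i ∧ ¬ Regular ε C p β b),
        bagSize p β b) = _
      rw [Finset.sum_filter, Finset.sum_filter]
      refine Finset.sum_congr rfl (fun b _ => ?_)
      by_cases h1 : σs b = i <;> by_cases h2 : Regular ε C p β b <;> simp [h1, h2]
    have hS : (∑ b : Fin M, if ¬ Regular ε C p β b then bagSize p β b else 0) = ∑ i, SL i := by
      rw [← Finset.sum_fiberwise_of_maps_to (fun b _ => Finset.mem_univ (σs b))
        (fun b => if ¬ Regular ε C p β b then bagSize p β b else 0)]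
      exact Finset.sum_congr rfl (fun i _ => (hSL2 i).symm)
    unfold Msand
    rw [hS, Nat.ceil_le, Finset.sum_div, Nat.cast_sum]
    exact Finset.sum_le_sum (fun i _ => Nat.le_ceil _)
  obtain ⟨f, hf⟩ := exists_fiber_bound m (Msand ε C p β) c hNle
  -- the item assignment
  set σI : BagIdx ε C p β → Fin m := Sum.elim
    (fun x => σs ((Bk ε C p β x.1.1).equivFin.symm (Fin.cast (Mhat_eq ε C p β x.1.1) x.2)))
    f with hσI
  have key : optMax (itemSz ε C p β) m ≤ ⨆ i, load (itemSz ε C p β) σI i :=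
    ciInf_le (Set.Finite.bddBelow (Set.finite_range _)) σI
  refine key.trans (ciSup_le fun i => ?_)
  have hload_i : load (bagSize p β) σs i ≤ optMax (bagSize p β) m :=
    (le_ciSup (Set.Finite.bddAbove (Set.finite_range _)) i).trans hopt
  -- expand the item load
  have hexpand : load (itemSz ε C p β) σI i =
      (∑ x : (Σ ℓ : (Lset ε C), Fin (Mhat ε C p β ℓ.1)),
        if σI (Sum.inl x) = i then (1 + ε) ^ ((x.1.1 : ℤ) + 1) else 0)
      + (∑ k : Fin (Msand ε C p β), if f k = i then (1 + ε) * ε * C else 0) := by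
    rw [load]
    rw [show (∑ b : BagIdx ε C p β, if σI b = i then itemSz ε C p β b else 0) =
      ∑ b : ((Σ ℓ : (Lset ε C), Fin (Mhat ε C p β ℓ.1)) ⊕ Fin (Msand ε C p β)),
        (if σI b = i then itemSz ε C p β b else 0) from
      Fintype.sum_equiv (Equiv.cast rfl) _ _ (fun x => by rfl)]
    rw [Fintype.sum_sum_type]
    rfl
  rw [hexpand]
  -- bound the regular part
  have hA : (∑ x : (Σ ℓ : (Lset ε C), Fin (Mhat ε C p β ℓ.1)),
      if σI (Sum.inl x) = i then (1 + ε) ^ ((x.1.1 : ℤ) + 1) else 0) ≤ (1 + ε) * RL i := by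
    have hmemBk : ∀ (ℓ : ℤ) (b : Fin M), b ∈ Bk ε C p β ℓ →
        Regular ε C p β b ∧ (1 + ε) ^ ℓ ≤ bagSize p β b ∧ bagSize p β b < (1 + ε) ^ (ℓ + 1) :=
      fun ℓ b hb => (Finset.mem_filter.mp hb).2
    set T : ℤ → Finset (Fin M) := fun ℓ => (Bk ε C p β ℓ).filter (fun b => σs b = i) with hT
    have step1 : (∑ x : (Σ ℓ : (Lset ε C), Fin (Mhat ε C p β ℓ.1)),
        if σI (Sum.inl x) = i then (1 + ε) ^ ((x.1.1 : ℤ) + 1) else 0)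
        = ∑ ℓ ∈ Lset ε C, ∑ b ∈ T ℓ, (1 + ε) ^ (ℓ + 1) := by
      rw [← Finset.sum_coe_sort (Lset ε C) (fun ℓ => ∑ b ∈ T ℓ, (1 + ε) ^ (ℓ + 1))]
      rw [← Finset.univ_sigma_univ, Finset.sum_sigma]
      refine Finset.sum_congr rfl (fun ℓ _ => ?_)
      rw [show (∑ k : Fin (Mhat ε C p β ℓ.1),
            if σI (Sum.inl ⟨ℓ, k⟩) = i then (1 + ε) ^ ((ℓ.1 : ℤ) + 1) else 0)
          = ∑ b : {b // b ∈ Bk ε C p β ℓ.1},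
            (if σs b.1 = i then (1 + ε) ^ ((ℓ.1 : ℤ) + 1) else 0) from
        Fintype.sum_equiv
          ((finCongr (Mhat_eq ε C p β ℓ.1)).trans (Bk ε C p β ℓ.1).equivFin.symm) _ _
          (fun k => by simp only [hσI, Sum.elim_inl]; rfl)]
      rw [Finset.sum_coe_sort (Bk ε C p β ℓ.1)
        (fun b => if σs b = i then (1 + ε) ^ ((ℓ.1 : ℤ) + 1) else 0)]
      rw [← Finset.sum_filter]
    rw [step1]
    have step2 : ∑ ℓ ∈ Lset ε C, ∑ b ∈ T ℓ, (1 + ε) ^ (ℓ + 1) ≤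
        ∑ ℓ ∈ Lset ε C, ∑ b ∈ T ℓ, (1 + ε) * bagSize p β b := by
      refine Finset.sum_le_sum (fun ℓ _ => Finset.sum_le_sum (fun b hb => ?_))
      have hbBk := hmemBk ℓ b (Finset.mem_filter.mp hb).1
      calc (1 + ε) ^ (ℓ + 1) = (1 + ε) * (1 + ε) ^ ℓ := by
            rw [zpow_add_one₀ (ne_of_gt hε)]; ring
        _ ≤ (1 + ε) * bagSize p β b := mul_le_mul_of_nonneg_left hbBk.2.1 (le_of_lt hε)
    refine step2.trans ?_
    have hdisj : (↑(Lset ε C) : Set ℤ).PairwiseDisjoint T := by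
      have key : ∀ a b : ℤ, a < b → Disjoint (T a) (T b) := by
        intro a b hab
        refine Finset.disjoint_left.mpr (fun x hx1 hx2 => ?_)
        have h1 := hmemBk a x (Finset.mem_filter.mp hx1).1
        have h2 := hmemBk b x (Finset.mem_filter.mp hx2).1
        have hab2 : (1 + ε) ^ (a + 1) ≤ (1 + ε) ^ b :=
          zpow_le_zpow_right₀ (by linarith) (by omega)
        linarith [h1.2.2, h2.2.1]
      intro ℓ₁ _ ℓ₂ _ hne
      rcases hne.lt_or_gt with h | h
      · exact key _ _ h
      · exact (key _ _ h).symm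
    rw [← Finset.sum_biUnion hdisj]
    have hsub : (Lset ε C).biUnion T ⊆
        Finset.univ.filter (fun b => σs b = i ∧ Regular ε C p β b) := by
      intro b hb
      obtain ⟨ℓ, _, hbT⟩ := Finset.mem_biUnion.mp hb
      have h1 := (Finset.mem_filter.mp hbT).2
      have h2 := (hmemBk ℓ b (Finset.mem_filter.mp hbT).1).1
      exact Finset.mem_filter.mpr ⟨Finset.mem_univ b, h1, h2⟩
    calc ∑ b ∈ (Lset ε C).biUnion T, (1 + ε) * bagSize p β b
        ≤ ∑ b ∈ Finset.univ.filter (fun b => σs b = i ∧ Regular ε C p β b),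
            (1 + ε) * bagSize p β b :=
          Finset.sum_le_sum_of_subset_of_nonneg hsub
            (fun b _ _ => mul_nonneg (le_of_lt hε) (hbag b))
      _ = (1 + ε) * RL i := by rw [hRL, Finset.mul_sum]
  -- bound the sand part
  have hB : (∑ k : Fin (Msand ε C p β), if f k = i then (1 + ε) * ε * C else 0) ≤
      (1 + ε) * SL i + (1 + ε) * (ε * C) := by
    calc (∑ k : Fin (Msand ε C p β), if f k = i then (1 + ε) * ε * C else 0)
        = ∑ k ∈ Finset.univ.filter (fun k => f k = i), ((1 + ε) * ε * C) :=
          (Finset.sum_filter _ _).symm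
      _ = ((Finset.univ.filter (fun k => f k = i)).card : ℝ) * ((1 + ε) * ε * C) := by
          rw [Finset.sum_const, nsmul_eq_mul]
      _ ≤ (c i : ℝ) * ((1 + ε) * ε * C) := by
          have := hf i
          have h1 : ((Finset.univ.filter (fun k => f k = i)).card : ℝ) ≤ (c i : ℝ) := by
            exact_mod_cast this
          exact mul_le_mul_of_nonneg_right h1 (by positivity)
      _ ≤ (SL i / (ε * C) + 1) * ((1 + ε) * ε * C) := by
          refine mul_le_mul_of_nonneg_right ?_ (by positivity)
          exact le_of_lt (Nat.ceil_lt_add_one (div_nonneg (hSLnn i) hεC.le))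
      _ = (1 + ε) * SL i + (1 + ε) * (ε * C) := by
          field_simp
  have hsum := hsplit i
  have hmul : (1 + ε) * (RL i + SL i) ≤ (1 + ε) * optMax (bagSize p β) m := by
    rw [hsum]; exact mul_le_mul_of_nonneg_left hload_i (le_of_lt hε)
  nlinarith [hA, hB, hεC, hε0, hC]
end

section
/- Let β be a partition of J into M (possibly empty) bags such that Opt_min(β, m) ≥ 1 for every m ∈ {1,…,M}. For an offset a ∈ {0,1,…,1/ε+3} let M_a := { m ∈ {1,…,M} : Opt_min(β, m) ∈ ⋃_{k=0}^{K} Ĩ^a_k }. Then there exists an offset a ∈ {0,1,…,1/ε+3} such that ∑_{m∈M_a} q_m · Opt_min(β, m) ≥ (1/(1+4ε)) · ∑_{m=1}^M q_m · Opt_min(β, m). -/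
open scoped BigOperators

attribute [local instance] Classical.propDecidable

/-- `Opt_min`: the maximum over all assignments of items (with sizes `sz`) to `m` identical
machines of the minimum machine load. -/
noncomputable def optMin {ι : Type*} [Fintype ι] (sz : ι → ℝ) (m : ℕ) : ℝ :=
  ⨆ σ : ι → Fin m, ⨅ i : Fin m, load sz σ i

set_option maxHeartbeats 1000000 in
lemma my_aux_offset (M : ℕ) (x ε : ℝ) (E d K : ℕ)
    (hx : 1 < x) (hε : 0 < ε) (hE : (E : ℝ) * ε = 1)
    (v g : Fin M → ℝ) (hg : ∀ i, 0 ≤ g i) (hv1 : ∀ i, 1 ≤ v i)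
    (hvd : ∀ i, v i < x ^ (d : ℝ))
    (hdK : (d : ℝ) ≤ 3 * (K : ℝ) + ((K : ℝ) - 1) / ε) :
    ∃ a : ℕ, (a : ℝ) ≤ 1 / ε + 3 ∧
      (1 / (1 + 4 * ε)) * (∑ i, g i) ≤
        ∑ i, if ∃ k ≤ K, v i ∈ Set.Ico (x ^ (3 * (k : ℝ) + ((k : ℝ) - 1) / ε + (a : ℝ)))
            (x ^ (3 * (k : ℝ) + (k : ℝ) / ε + (a : ℝ))) then g i else 0 := by
  classical
  have hE0 : 0 < (E : ℝ) := by nlinarith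
  have hE1 : 1 ≤ E := by exact_mod_cast Nat.one_le_cast.mpr (by exact_mod_cast Nat.pos_of_ne_zero (fun h => by simp [h] at hE0))
  have hεE : ε = 1 / (E : ℝ) := by field_simp; linear_combination hE
  have hdiv : ∀ y : ℝ, y / ε = y * E := by intro y; rw [hεE]; field_simp
  set P : ℕ → Fin M → Prop := fun a i =>
    ∃ k ≤ K, v i ∈ Set.Ico (x ^ (3 * (k : ℝ) + ((k : ℝ) - 1) / ε + (a : ℝ)))
      (x ^ (3 * (k : ℝ) + (k : ℝ) / ε + (a : ℝ))) with hP
  have key : ∀ i, (E : ℝ) * g i ≤ ∑ a ∈ Finset.range (E + 4), if P a i then g i else 0 := by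
    intro i
    have hv0 : 0 < v i := lt_of_lt_of_le zero_lt_one (hv1 i)
    set t := Real.logb x (v i) with htdef
    have hxt : x ^ t = v i := Real.rpow_logb (lt_trans zero_lt_one hx) (ne_of_gt hx) hv0
    have ht0 : 0 ≤ t := Real.logb_nonneg hx (hv1 i)
    have htd : t < (d : ℝ) := (Real.logb_lt_iff_lt_rpow hx hv0).mpr (hvd i)
    have hmem : ∀ L U : ℝ, (v i ∈ Set.Ico (x ^ L) (x ^ U)) ↔ (L ≤ t ∧ t < U) := by
      intro L U
      rw [Set.mem_Ico, ← hxt, Real.rpow_le_rpow_left_iff hx, Real.rpow_lt_rpow_left_iff hx]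
    have hE3 : (0 : ℝ) < (E : ℝ) + 3 := by linarith
    set k₀ : ℕ := ⌊t / ((E : ℝ) + 3)⌋₊ with hk0
    have hk0le : (k₀ : ℝ) * ((E : ℝ) + 3) ≤ t := by
      have h1 : (k₀ : ℝ) ≤ t / ((E : ℝ) + 3) := Nat.floor_le (by positivity)
      calc (k₀ : ℝ) * ((E : ℝ) + 3) ≤ (t / ((E : ℝ) + 3)) * ((E : ℝ) + 3) := by
            exact mul_le_mul_of_nonneg_right h1 (le_of_lt hE3)
        _ = t := by field_simp
    have hk0lt : t < ((k₀ : ℝ) + 1) * ((E : ℝ) + 3) := by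
      have h1 : t / ((E : ℝ) + 3) < (k₀ : ℝ) + 1 := Nat.lt_floor_add_one _
      calc t = (t / ((E : ℝ) + 3)) * ((E : ℝ) + 3) := by field_simp
        _ < ((k₀ : ℝ) + 1) * ((E : ℝ) + 3) := by exact mul_lt_mul_of_pos_right h1 hE3
    set u : ℝ := t - (k₀ : ℝ) * ((E : ℝ) + 3) with hu
    have hu0 : 0 ≤ u := by simp only [hu]; linarith
    have hexp0 : ((k₀ : ℝ) + 1) * ((E : ℝ) + 3) = (k₀ : ℝ) * ((E : ℝ) + 3) + (E : ℝ) + 3 := by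
      ring
    have huE : u < (E : ℝ) + 3 := by simp only [hu]; linarith [hk0lt, hexp0]
    set b : ℕ := ⌊u⌋₊ with hb
    have hbu : (b : ℝ) ≤ u := Nat.floor_le hu0
    have hub : u < (b : ℝ) + 1 := Nat.lt_floor_add_one u
    have hbE : b ≤ E + 2 := by
      have h1 : (b : ℝ) < (E : ℝ) + 3 := lt_of_le_of_lt hbu huE
      have h2 : (b : ℝ) < ((E + 3 : ℕ) : ℝ) := by push_cast; linarith
      have := Nat.cast_lt.mp h2
      omega
    have hk0K : k₀ + 1 ≤ K := by
      have hexpK : (K : ℝ) * ((E : ℝ) + 3) = 3 * (K : ℝ) + (K : ℝ) * E := by ring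
      have hd' : (d : ℝ) ≤ (K : ℝ) * ((E : ℝ) + 3) - E := by
        rw [hdiv] at hdK; linarith [hdK, hexpK]
      have h1 : t < (K : ℝ) * ((E : ℝ) + 3) := by linarith [htd, hd', hE0]
      have h2 : (k₀ : ℝ) < (K : ℝ) := (mul_lt_mul_iff_of_pos_right hE3).mp (by linarith [hk0le, h1])
      have := Nat.cast_lt.mp h2
      omega
    have good : ∀ a k : ℕ, k ≤ K → (k : ℝ) * ((E : ℝ) + 3) - E + a ≤ t →
        t < (k : ℝ) * ((E : ℝ) + 3) + a → P a i := by
      intro a k hk h1 h2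
      have hexp : (k : ℝ) * ((E : ℝ) + 3) = 3 * (k : ℝ) + (k : ℝ) * E := by ring
      refine ⟨k, hk, (hmem _ _).2 ⟨?_, ?_⟩⟩
      · rw [hdiv]; linarith [hexp, h1]
      · rw [hdiv]; linarith [hexp, h2]
    -- construct the good set G
    obtain ⟨G, hGcard, hGmem⟩ :
        ∃ G : Finset ℕ, G.card = E ∧ ∀ a ∈ G, a ∈ Finset.range (E + 4) ∧ P a i := by
      by_cases hb3 : b ≤ 3
      · refine ⟨Finset.Icc (b + 1) (b + E), ?_, ?_⟩
        · rw [Nat.card_Icc]; omega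
        · intro a ha
          rw [Finset.mem_Icc] at ha
          constructor
          · rw [Finset.mem_range]; omega
          · apply good a k₀ (by omega)
            · have h1 : (a : ℝ) ≤ (b : ℝ) + E := by
                have : (a : ℝ) ≤ ((b + E : ℕ) : ℝ) := Nat.cast_le.mpr ha.2
                push_cast at this; linarith
              simp only [hu] at hbu; linarith
            · have h2 : (b : ℝ) + 1 ≤ (a : ℝ) := by
                have : ((b + 1 : ℕ) : ℝ) ≤ (a : ℝ) := Nat.cast_le.mpr ha.1
                push_cast at this; linarith
              simp only [hu] at hub; linarith
      · push_neg at hb3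
        refine ⟨Finset.Icc (b + 1) (E + 3) ∪ Finset.Icc 0 (b - 4), ?_, ?_⟩
        · rw [Finset.card_union_of_disjoint, Nat.card_Icc, Nat.card_Icc]
          · omega
          · rw [Finset.disjoint_left]
            intro a ha1 ha2
            rw [Finset.mem_Icc] at ha1 ha2
            omega
        · intro a ha
          rw [Finset.mem_union, Finset.mem_Icc, Finset.mem_Icc] at ha
          rcases ha with ha | ha
          · constructor
            · rw [Finset.mem_range]; omega
            · apply good a k₀ (by omega)
              · have h1 : (a : ℝ) ≤ (E : ℝ) + 3 := by
                  have : (a : ℝ) ≤ ((E + 3 : ℕ) : ℝ) := Nat.cast_le.mpr ha.2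
                  push_cast at this; linarith
                have h4 : (4 : ℝ) ≤ (b : ℝ) := by exact_mod_cast hb3
                simp only [hu] at hbu; linarith
              · have h2 : (b : ℝ) + 1 ≤ (a : ℝ) := by
                  have : ((b + 1 : ℕ) : ℝ) ≤ (a : ℝ) := Nat.cast_le.mpr ha.1
                  push_cast at this; linarith
                simp only [hu] at hub; linarith
          · have ha4 : a + 4 ≤ b := by omega
            constructor
            · rw [Finset.mem_range]; omega
            · apply good a (k₀ + 1) hk0K
              · have h1 : (a : ℝ) + 4 ≤ (b : ℝ) := by
                  have : ((a + 4 : ℕ) : ℝ) ≤ (b : ℝ) := Nat.cast_le.mpr ha4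
                  push_cast at this; linarith
                simp only [hu] at hbu
                push_cast
                linarith [hexp0, h1, hbu]
              · simp only [hu] at huE
                push_cast
                have ha0 : (0 : ℝ) ≤ (a : ℝ) := Nat.cast_nonneg a
                linarith [hexp0, huE, ha0]
    -- conclude key
    have hGsub : G ⊆ Finset.range (E + 4) := fun a ha => (hGmem a ha).1
    calc (E : ℝ) * g i = ∑ _a ∈ G, g i := by
          rw [Finset.sum_const, hGcard, nsmul_eq_mul]
      _ = ∑ a ∈ G, (if P a i then g i else 0) := by
          apply Finset.sum_congr rfl
          intro a ha
          rw [if_pos (hGmem a ha).2]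
      _ ≤ ∑ a ∈ Finset.range (E + 4), (if P a i then g i else 0) := by
          apply Finset.sum_le_sum_of_subset_of_nonneg hGsub
          intro a _ _
          split
          · exact hg i
          · exact le_rfl
  -- aggregate
  have total : (E : ℝ) * (∑ i, g i) ≤
      ∑ a ∈ Finset.range (E + 4), ∑ i, if P a i then g i else 0 := by
    rw [Finset.sum_comm, Finset.mul_sum]
    exact Finset.sum_le_sum (fun i _ => key i)
  have h14 : (0 : ℝ) < 1 + 4 * ε := by linarith
  have hsum0 : 0 ≤ ∑ i, g i := Finset.sum_nonneg (fun i _ => hg i)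
  have hc : ((E : ℝ) + 4) * (1 / (1 + 4 * ε)) = E := by
    field_simp
    linarith [hE]
  have hconst : ∑ _a ∈ Finset.range (E + 4), (1 / (1 + 4 * ε)) * (∑ i, g i) ≤
      ∑ a ∈ Finset.range (E + 4), ∑ i, if P a i then g i else 0 := by
    rw [Finset.sum_const, Finset.card_range, nsmul_eq_mul]
    push_cast
    calc ((E : ℝ) + 4) * ((1 / (1 + 4 * ε)) * (∑ i, g i))
        = (((E : ℝ) + 4) * (1 / (1 + 4 * ε))) * (∑ i, g i) := by ring
      _ = (E : ℝ) * (∑ i, g i) := by rw [hc]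
      _ ≤ _ := total
  obtain ⟨a, ha, hle⟩ := Finset.exists_le_of_sum_le ⟨0, by simp⟩ hconst
  refine ⟨a, ?_, hle⟩
  have ha' : a ≤ E + 3 := by rw [Finset.mem_range] at ha; omega
  have : (a : ℝ) ≤ (E : ℝ) + 3 := by exact_mod_cast ha'
  rw [hεE, one_div_one_div]
  linarith

lemma my_optMin_le_sum {n M : ℕ} (p : Fin n → ℝ) (hp : ∀ j, 0 ≤ p j) (β : Fin n → Fin M)
    (m : ℕ) (hm : 0 < m) : optMin (bagSize p β) m ≤ ∑ j, p j := by
  classical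
  haveI : Nonempty (Fin m) := ⟨⟨0, hm⟩⟩
  apply ciSup_le
  intro σ
  have h1 : (⨅ i : Fin m, load (bagSize p β) σ i) ≤ load (bagSize p β) σ ⟨0, hm⟩ :=
    ciInf_le (Set.Finite.bddBelow (Set.finite_range _)) _
  refine h1.trans ?_
  unfold load
  have hbag : ∀ b : Fin M, 0 ≤ bagSize p β b := by
    intro b
    unfold bagSize
    apply Finset.sum_nonneg
    intro j _
    split
    · exact hp j
    · exact le_rfl
  calc ∑ b : Fin M, (if σ b = ⟨0, hm⟩ then bagSize p β b else 0)
      ≤ ∑ b : Fin M, bagSize p β b := by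
        apply Finset.sum_le_sum
        intro b _
        split
        · exact le_rfl
        · exact hbag b
    _ = ∑ j, p j := by
        unfold bagSize
        rw [Finset.sum_comm]
        apply Finset.sum_congr rfl
        intro j _
        have h := Fintype.sum_ite_eq (β j) (fun _ => p j)
        convert h using 2 with b
        congr 1

/-- existence of a good offset `a ∈ {0,…,1/ε+3}` such that the scenarios `m`
with `Opt_min(β,m)` in `⋃_{k=0}^K Ĩ^a_k` contribute at least a `1/(1+4ε)` fraction of the
expected minimum machine load.  Here processing times are positive integers, `1/ε = E ∈ ℕ`,
`d` is the smallest positive integer with `(n/ε)^d > ∑_j p_j`, `K` is the smallest positive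
integer with `3K + (K−1)/ε ≥ d`, and `Ĩ^a_k = [(n/ε)^{3k+(k−1)/ε+a}, (n/ε)^{3k+k/ε+a})`.
Scenario `i : Fin M` corresponds to `m = i+1` machines. -/
theorem stmt5 (n M : ℕ) (hM : 1 ≤ M)
    (p : Fin n → ℕ) (hp : ∀ j, 1 ≤ p j)
    (q : Fin M → ℝ) (hq : ∀ i, 0 ≤ q i) (hq1 : ∑ i, q i = 1)
    (ε : ℝ) (hε : 0 < ε) (E : ℕ) (hE : (E : ℝ) * ε = 1)
    (hx : 1 < (n : ℝ) / ε)
    (d : ℕ) (hd1 : 1 ≤ d)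
    (hd2 : (∑ j : Fin n, (p j : ℝ)) < ((n : ℝ) / ε) ^ d)
    (hdmin : ∀ d' : ℕ, 1 ≤ d' → (∑ j : Fin n, (p j : ℝ)) < ((n : ℝ) / ε) ^ d' → d ≤ d')
    (K : ℕ) (hK1 : 1 ≤ K)
    (hK2 : (d : ℝ) ≤ 3 * (K : ℝ) + ((K : ℝ) - 1) / ε)
    (hKmin : ∀ K' : ℕ, 1 ≤ K' → (d : ℝ) ≤ 3 * (K' : ℝ) + ((K' : ℝ) - 1) / ε → K ≤ K')
    (β : Fin n → Fin M)
    (hβ : ∀ i : Fin M, 1 ≤ optMin (bagSize (fun j => (p j : ℝ)) β) (i.1 + 1)) :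
    ∃ a : ℕ, (a : ℝ) ≤ 1 / ε + 3 ∧
      (1 / (1 + 4 * ε)) *
          (∑ i : Fin M, q i * optMin (bagSize (fun j => (p j : ℝ)) β) (i.1 + 1)) ≤
        ∑ i : Fin M,
          if ∃ k ≤ K, optMin (bagSize (fun j => (p j : ℝ)) β) (i.1 + 1) ∈
              Set.Ico (((n : ℝ) / ε) ^ (3 * (k : ℝ) + ((k : ℝ) - 1) / ε + (a : ℝ)))
                (((n : ℝ) / ε) ^ (3 * (k : ℝ) + (k : ℝ) / ε + (a : ℝ)))
          then q i * optMin (bagSize (fun j => (p j : ℝ)) β) (i.1 + 1) else 0 := by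
  classical
  have hvd : ∀ i : Fin M,
      optMin (bagSize (fun j => (p j : ℝ)) β) (i.1 + 1) < ((n : ℝ) / ε) ^ ((d : ℕ) : ℝ) := by
    intro i
    have h1 : optMin (bagSize (fun j => (p j : ℝ)) β) (i.1 + 1) ≤ ∑ j, ((p j : ℕ) : ℝ) :=
      my_optMin_le_sum (fun j => (p j : ℝ)) (fun j => by positivity) β (i.1 + 1) (Nat.succ_pos _)
    rw [Real.rpow_natCast]
    exact lt_of_le_of_lt h1 hd2
  have hg : ∀ i : Fin M, 0 ≤ q i * optMin (bagSize (fun j => (p j : ℝ)) β) (i.1 + 1) := by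
    intro i
    exact mul_nonneg (hq i) (le_trans zero_le_one (hβ i))
  exact my_aux_offset M ((n : ℝ) / ε) ε E d K hx hε hE
    (fun i => optMin (bagSize (fun j => (p j : ℝ)) β) (i.1 + 1))
    (fun i => q i * optMin (bagSize (fun j => (p j : ℝ)) β) (i.1 + 1))
    hg hβ hvd hK2
end

section
/- For every real v with 1 ≤ v < (n/ε)^d, the number of offsets a ∈ {0,1,…,1/ε+3} such that v ∈ ⋃_{k=0}^{K} Ĩ^a_k is at least 1/ε. -/
open scoped BigOperators

attribute [local instance] Classical.propDecidable

/-- for every real `v` with `1 ≤ v < (n/ε)^d`, the number of offsets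
`a ∈ {0,…,1/ε+3}` (with `1/ε = E ∈ ℕ`) such that `v` lies in `⋃_{k=0}^K Ĩ^a_k` is at least
`1/ε = E`, where `Ĩ^a_k = [(n/ε)^{3k+(k−1)/ε+a}, (n/ε)^{3k+k/ε+a})` and `K` is the smallest
positive integer with `3K + (K−1)/ε ≥ d`. -/
theorem stmt6 (n : ℕ) (ε : ℝ) (hε : 0 < ε) (E : ℕ) (hE : (E : ℝ) * ε = 1)
    (hx : 1 < (n : ℝ) / ε) (d : ℕ) (hd : 1 ≤ d)
    (K : ℕ) (hK1 : 1 ≤ K)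
    (hK2 : (d : ℝ) ≤ 3 * (K : ℝ) + ((K : ℝ) - 1) / ε)
    (hKmin : ∀ K' : ℕ, 1 ≤ K' → (d : ℝ) ≤ 3 * (K' : ℝ) + ((K' : ℝ) - 1) / ε → K ≤ K')
    (v : ℝ) (hv1 : 1 ≤ v) (hv2 : v < ((n : ℝ) / ε) ^ d) :
    E ≤ ((Finset.range (E + 4)).filter (fun a : ℕ =>
        ∃ k ≤ K, v ∈ Set.Ico (((n : ℝ) / ε) ^ (3 * (k : ℝ) + ((k : ℝ) - 1) / ε + (a : ℝ)))
          (((n : ℝ) / ε) ^ (3 * (k : ℝ) + (k : ℝ) / ε + (a : ℝ))))).card := by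
  have hεne : ε ≠ 0 := ne_of_gt hε
  have hE1 : 1 ≤ E := by
    rcases Nat.eq_zero_or_pos E with h | h
    · subst h; simp at hE
    · exact h
  have hEr : (1:ℝ) ≤ (E:ℝ) := by exact_mod_cast hE1
  have hdiv : ∀ c : ℝ, c / ε = c * E := by
    intro c; rw [div_eq_iff hεne, mul_assoc, hE, mul_one]
  set x := (n:ℝ)/ε with hxdef
  have hx0 : (0:ℝ) < x := lt_trans one_pos hx
  have hv0 : (0:ℝ) < v := lt_of_lt_of_le one_pos hv1
  set t := Real.logb x v with htdef
  have hxv : x ^ t = v := Real.rpow_logb hx0 (ne_of_gt hx) hv0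
  have ht0 : (0:ℝ) ≤ t := Real.logb_nonneg hx hv1
  have htd : t < (d:ℝ) := by
    rw [← Real.rpow_lt_rpow_left_iff hx, hxv, Real.rpow_natCast]
    exact hv2
  have hmem : ∀ L U : ℝ, v ∈ Set.Ico (x ^ L) (x ^ U) ↔ (L ≤ t ∧ t < U) := by
    intro L U
    rw [Set.mem_Ico, ← hxv, Real.rpow_le_rpow_left_iff hx, Real.rpow_lt_rpow_left_iff hx]
  have hK2' : (d:ℝ) ≤ 3 * (K:ℝ) + ((K:ℝ) - 1) * E := by
    rwa [hdiv] at hK2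
  have hPr : (0:ℝ) < (E:ℝ) + 3 := by positivity
  set k0 : ℕ := (⌊t / ((E:ℝ)+3)⌋).toNat with hk0def
  have hk0f : (k0:ℝ) = (⌊t / ((E:ℝ)+3)⌋ : ℤ) := by
    have h := Int.toNat_of_nonneg (Int.floor_nonneg.2 (div_nonneg ht0 hPr.le))
    rw [hk0def]
    exact_mod_cast h
  have hk0l : (k0:ℝ) * ((E:ℝ)+3) ≤ t := by
    have h := Int.floor_le (t / ((E:ℝ)+3))
    rw [← hk0f] at h
    nlinarith [div_mul_cancel₀ t hPr.ne', hPr]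
  have hk0u : t < ((k0:ℝ) + 1) * ((E:ℝ)+3) := by
    have h := Int.lt_floor_add_one (t / ((E:ℝ)+3))
    rw [← hk0f] at h
    nlinarith [div_mul_cancel₀ t hPr.ne', hPr]
  set r : ℝ := t - (k0:ℝ) * ((E:ℝ)+3) with hrdef
  have hr0 : (0:ℝ) ≤ r := by rw [hrdef]; linarith
  have hrP : r < (E:ℝ) + 3 := by rw [hrdef]; nlinarith
  set j : ℕ := (⌊r⌋).toNat with hjdef
  have hjf : (j:ℝ) = (⌊r⌋ : ℤ) := by
    have h := Int.toNat_of_nonneg (Int.floor_nonneg.2 hr0)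
    rw [hjdef]
    exact_mod_cast h
  have hjl : (j:ℝ) ≤ r := by rw [hjf]; exact Int.floor_le r
  have hju : r < (j:ℝ) + 1 := by rw [hjf]; exact Int.lt_floor_add_one r
  have hjE : j < E + 3 := by
    have h : (j:ℝ) < (E:ℝ) + 3 := lt_of_le_of_lt hjl hrP
    exact_mod_cast h
  have ht_eq : t = r + (k0:ℝ) * ((E:ℝ)+3) := by rw [hrdef]; ring
  have hk0K : k0 < K := by
    have h : (k0:ℝ) < (K:ℝ) := by nlinarith
    exact_mod_cast h
  clear_value x t k0 r j
  clear hxdef htdef hk0def hrdef hjdef hk0f hjf hKmin hE hv2 hxv hK2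
  conv_lhs => rw [← Finset.card_range E]
  apply Finset.card_le_card_of_injOn
    (fun i => if j + 1 + i ≤ E + 3 then j + 1 + i else j + 1 + i - (E + 3))
  · intro i hi
    rw [Finset.mem_coe, Finset.mem_range] at hi
    have hir : (i:ℝ) + 1 ≤ (E:ℝ) := by exact_mod_cast hi
    rw [Finset.mem_coe, Finset.mem_filter, Finset.mem_range]
    by_cases hcase : j + 1 + i ≤ E + 3
    · simp only [if_pos hcase]
      refine ⟨by omega, k0, hk0K.le, ?_⟩
      rw [hmem, hdiv, hdiv]
      constructor
      · push_cast; linarith [ht_eq, hjl, hir]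
      · push_cast; linarith [ht_eq, hju]
    · simp only [if_neg hcase]
      have hsub : E + 3 ≤ j + 1 + i := by omega
      have hacast : ((j + 1 + i - (E + 3) : ℕ) : ℝ)
          = (j:ℝ) + 1 + (i:ℝ) - ((E:ℝ) + 3) := by
        rw [Nat.cast_sub hsub]; push_cast; ring
      refine ⟨by omega, k0 + 1, by omega, ?_⟩
      rw [hmem, hdiv, hdiv]
      constructor
      · rw [hacast]; push_cast; linarith [ht_eq, hjl, hir]
      · rw [hacast]; push_cast; linarith [ht_eq, hju]
  · intro i1 h1 i2 h2 hf
    simp only [Finset.coe_range, Set.mem_Iio] at h1 h2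
    simp only at hf
    split_ifs at hf <;> omega
end

section
/- Suppose that no job j ∈ J has processing time p_j lying in any head gap G̃_{k'} for k' ≥ 1, and let J_{k−1} := { j ∈ J : p_j ∈ Ĩ⁺_{k−1} }. Then for every job j* ∈ J with p_{j*} ∈ ⋃_{k'≥k} Ĩ⁺_{k'} (equivalently, p_{j*} ≥ (n/ε)^{3k+(k−1)/ε+a−3}) it holds that ∑_{j∈J_{k−1}} p_j < ε · p_{j*}. In words: the sum of the processing times of jobs in J_{k−1} is strictly less than ε times the processing time of any job in ⋃_{k'≥k} J_{k'}. -/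
open scoped BigOperators

attribute [local instance] Classical.propDecidable

/-- if no job's processing time lies in any head gap
`G̃_{k'} = [(n/ε)^{3k'+(k'−1)/ε+a−3}, (n/ε)^{3k'+(k'−1)/ε+a−2})` for `k' ≥ 1`, then the total
processing time of the jobs in `J_{k−1}` (those with `p_j` in the extended interval
`Ĩ⁺_{k−1} = [(n/ε)^{3(k−1)+(k−2)/ε+a−3}, (n/ε)^{3(k−1)+(k−1)/ε+a})`) is strictly less than
`ε` times the processing time of any job `j*` with
`p_{j*} ≥ (n/ε)^{3k+(k−1)/ε+a−3}` (i.e., any job of `⋃_{k'≥k} J_{k'}`). -/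
theorem stmt7 (n : ℕ) (hn : 1 ≤ n) (p : Fin n → ℝ) (hp : ∀ j, 0 ≤ p j)
    (ε : ℝ) (hε : 0 < ε) (E : ℕ) (hE : (E : ℝ) * ε = 1)
    (a : ℕ) (k : ℕ) (hk : 1 ≤ k)
    (hx : 1 < (n : ℝ) / ε)
    (hgap : ∀ j : Fin n, ∀ k' : ℕ, 1 ≤ k' →
      p j ∉ Set.Ico
        (((n : ℝ) / ε) ^ (3 * (k' : ℝ) + ((k' : ℝ) - 1) / ε + (a : ℝ) - 3))
        (((n : ℝ) / ε) ^ (3 * (k' : ℝ) + ((k' : ℝ) - 1) / ε + (a : ℝ) - 2)))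
    (jstar : Fin n)
    (hjstar : ((n : ℝ) / ε) ^ (3 * (k : ℝ) + ((k : ℝ) - 1) / ε + (a : ℝ) - 3) ≤ p jstar) :
    (∑ j : Fin n,
        if p j ∈ Set.Ico
            (((n : ℝ) / ε) ^ (3 * ((k : ℝ) - 1) + (((k : ℝ) - 1) - 1) / ε + (a : ℝ) - 3))
            (((n : ℝ) / ε) ^ (3 * ((k : ℝ) - 1) + ((k : ℝ) - 1) / ε + (a : ℝ)))
        then p j else 0) < ε * p jstar := by
  set x := (n : ℝ) / ε with hxdef
  have hx0 : 0 < x := lt_trans one_pos hx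
  have hεne : ε ≠ 0 := ne_of_gt hε
  set e := 3 * (k : ℝ) + ((k : ℝ) - 1) / ε + (a : ℝ) - 3 with he
  have hXpos : 0 < x ^ e := Real.rpow_pos_of_pos hx0 e
  have h2 : x ^ (e + 1) ≤ p jstar := by
    by_contra h
    push_neg at h
    refine hgap jstar k hk ⟨hjstar, ?_⟩
    have hh : 3 * (k : ℝ) + ((k : ℝ) - 1) / ε + (a : ℝ) - 2 = e + 1 := by ring
    rw [hh]; exact h
  have hup : 3 * ((k : ℝ) - 1) + ((k : ℝ) - 1) / ε + (a : ℝ) = e := by ring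
  have hterm : ∀ j : Fin n,
      (if p j ∈ Set.Ico (x ^ (3 * ((k : ℝ) - 1) + (((k : ℝ) - 1) - 1) / ε + (a : ℝ) - 3))
          (x ^ (3 * ((k : ℝ) - 1) + ((k : ℝ) - 1) / ε + (a : ℝ))) then p j else 0) < x ^ e := by
    intro j
    split
    · next hmem =>
        have := hmem.2
        rwa [hup] at this
    · exact hXpos
  have hnonempty : (Finset.univ : Finset (Fin n)).Nonempty := by
    have : Nonempty (Fin n) := Fin.pos_iff_nonempty.mp hn
    exact Finset.univ_nonempty
  have hsum := Finset.sum_lt_sum_of_nonempty hnonempty (fun j _ => hterm j)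
  rw [Finset.sum_const, Finset.card_univ, Fintype.card_fin, nsmul_eq_mul] at hsum
  have hkey : (n : ℝ) * x ^ e = ε * x ^ (e + 1) := by
    rw [Real.rpow_add_one (ne_of_gt hx0), hxdef]
    field_simp
  calc (∑ j : Fin n,
        if p j ∈ Set.Ico (x ^ (3 * ((k : ℝ) - 1) + (((k : ℝ) - 1) - 1) / ε + (a : ℝ) - 3))
            (x ^ (3 * ((k : ℝ) - 1) + ((k : ℝ) - 1) / ε + (a : ℝ))) then p j else 0)
      < (n : ℝ) * x ^ e := hsum
    _ = ε * x ^ (e + 1) := hkey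
    _ ≤ ε * p jstar := by
        exact mul_le_mul_of_nonneg_left h2 (le_of_lt hε)
end

section
/- Let m ≥ 1 be an integer, let L_1,…,L_m ≥ 0 be initial machine loads, let s ≥ 0, and let b_1,…,b_r ∈ [0,s] be bag sizes with total volume W := ∑_{j=1}^r b_j. Define the fractional water level F := max{ min_{1≤i≤m} (L_i + x_i) : x_1,…,x_m ≥ 0, ∑_{i=1}^m x_i = W }. Then: (i) for every assignment τ : {1,…,r} → {1,…,m}, min_{1≤i≤m} ( L_i + ∑_{j : τ(j)=i} b_j ) ≤ F; and (ii) there exists an assignment τ : {1,…,r} → {1,…,m} with min_{1≤i≤m} ( L_i + ∑_{j : τ(j)=i} b_j ) ≥ F − s. -/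
open scoped BigOperators

attribute [local instance] Classical.propDecidable

private lemma greedy_aux (m : ℕ) (hm : 0 < m) (s : ℝ) (hs : 0 ≤ s) :
    ∀ (r : ℕ) (b : Fin r → ℝ), (∀ j, 0 ≤ b j ∧ b j ≤ s) → ∀ L : Fin m → ℝ,
    ∃ τ : Fin r → Fin m, ∀ i : Fin m,
      (∑ j, if τ j = i then b j else 0) = 0 ∨
      L i + (∑ j, if τ j = i then b j else 0) ≤
        (⨅ i' : Fin m, (L i' + ∑ j, if τ j = i' then b j else 0)) + s := by
  intro r
  induction r with
  | zero =>
    intro b hb L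
    exact ⟨Fin.elim0, fun i => Or.inl (by simp)⟩
  | succ n ih =>
    intro b hb L
    haveI : Nonempty (Fin m) := ⟨⟨0, hm⟩⟩
    obtain ⟨i₁, hi₁⟩ := Finite.exists_min L
    set L' := Function.update L i₁ (L i₁ + b 0) with hL'
    obtain ⟨τ', hτ'⟩ := ih (fun j => b j.succ) (fun j => hb j.succ) L'
    refine ⟨Fin.cases i₁ τ', ?_⟩
    have hload : ∀ i, L i + (∑ j : Fin (n+1),
        if (Fin.cases i₁ τ' : Fin (n+1) → Fin m) j = i then b j else 0)
        = L' i + ∑ j : Fin n, if τ' j = i then b j.succ else 0 := by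
      intro i
      rw [Fin.sum_univ_succ]
      show L i + ((if i₁ = i then b 0 else 0) + ∑ j : Fin n, if τ' j = i then b j.succ else 0) = _
      by_cases h : i₁ = i
      · subst h
        rw [if_pos rfl, hL', Function.update_self]
        ring
      · rw [if_neg h, hL', Function.update_of_ne (fun hh => h hh.symm)]
        ring
    have hinf : (⨅ i' : Fin m, (L i' + ∑ j : Fin (n+1),
        if (Fin.cases i₁ τ' : Fin (n+1) → Fin m) j = i' then b j else 0))
        = ⨅ i' : Fin m, (L' i' + ∑ j : Fin n, if τ' j = i' then b j.succ else 0) :=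
      iInf_congr hload
    have hsum_nonneg : ∀ i, (0:ℝ) ≤ ∑ j : Fin n, if τ' j = i then b j.succ else 0 := by
      intro i
      apply Finset.sum_nonneg
      intro j _
      by_cases h : τ' j = i
      · simp [h, (hb j.succ).1]
      · simp [h]
    have hLlow : ∀ i', L i₁ ≤ L' i' + ∑ j : Fin n, if τ' j = i' then b j.succ else 0 := by
      intro i'
      have h1 : L i₁ ≤ L' i' := by
        by_cases h : i' = i₁
        · subst h
          rw [hL', Function.update_self]
          linarith [(hb 0).1]
        · rw [hL', Function.update_of_ne h]
          exact hi₁ i'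
      linarith [hsum_nonneg i']
    have hinf_low : L i₁ ≤ ⨅ i' : Fin m,
        (L' i' + ∑ j : Fin n, if τ' j = i' then b j.succ else 0) :=
      le_ciInf hLlow
    intro i
    rcases hτ' i with h | h
    · by_cases hc : i = i₁
      · subst hc
        right
        rw [hinf]
        have := hload i
        rw [h, add_zero] at this
        rw [this, hL', Function.update_self]
        have hb0 := (hb 0).2
        linarith
      · left
        rw [Fin.sum_univ_succ]
        show (if i₁ = i then b 0 else 0) + (∑ j : Fin n, if τ' j = i then b j.succ else 0) = 0
        rw [if_neg (fun hh => hc hh.symm), h, add_zero]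
    · right
      rw [hinf, hload i]
      exact h

/-- water-filling.  Given initial loads `L_i ≥ 0` on `m ≥ 1` machines and bags of
sizes `b_j ∈ [0,s]` with total volume `W = ∑ b_j`, let `F` be the fractional water level, the
maximum of `min_i (L_i + x_i)` over all fractional distributions `x ≥ 0` with `∑ x_i = W`.
Then (i) every integral assignment achieves minimum load at most `F`, and (ii) some integral
assignment achieves minimum load at least `F − s`. -/
theorem stmt9 (m : ℕ) (hm : 0 < m) (L : Fin m → ℝ) (hL : ∀ i, 0 ≤ L i)
    (s : ℝ) (hs : 0 ≤ s) (r : ℕ) (b : Fin r → ℝ) (hb : ∀ j, 0 ≤ b j ∧ b j ≤ s) :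
    (∀ τ : Fin r → Fin m,
      (⨅ i : Fin m, (L i + ∑ j : Fin r, if τ j = i then b j else 0)) ≤
        sSup {v : ℝ | ∃ x : Fin m → ℝ, (∀ i, 0 ≤ x i) ∧ (∑ i, x i) = (∑ j, b j) ∧
          v = ⨅ i : Fin m, (L i + x i)}) ∧
    ∃ τ : Fin r → Fin m,
      sSup {v : ℝ | ∃ x : Fin m → ℝ, (∀ i, 0 ≤ x i) ∧ (∑ i, x i) = (∑ j, b j) ∧
          v = ⨅ i : Fin m, (L i + x i)} - s ≤
        ⨅ i : Fin m, (L i + ∑ j : Fin r, if τ j = i then b j else 0) := by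
  haveI : Nonempty (Fin m) := ⟨⟨0, hm⟩⟩
  set S : Set ℝ := {v : ℝ | ∃ x : Fin m → ℝ, (∀ i, 0 ≤ x i) ∧ (∑ i, x i) = (∑ j, b j) ∧
      v = ⨅ i : Fin m, (L i + x i)} with hS
  have hbnonneg : ∀ (τ : Fin r → Fin m) (i : Fin m),
      (0:ℝ) ≤ ∑ j : Fin r, if τ j = i then b j else 0 := by
    intro τ i
    apply Finset.sum_nonneg
    intro j _
    by_cases h : τ j = i
    · simp [h, (hb j).1]
    · simp [h]
  have hswap : ∀ τ : Fin r → Fin m,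
      (∑ i : Fin m, ∑ j : Fin r, if τ j = i then b j else 0) = ∑ j, b j := by
    intro τ
    rw [Finset.sum_comm]
    apply Finset.sum_congr rfl
    intro j _
    simp [Finset.sum_ite_eq]
  have hmem : ∀ τ : Fin r → Fin m,
      (⨅ i : Fin m, (L i + ∑ j : Fin r, if τ j = i then b j else 0)) ∈ S := by
    intro τ
    exact ⟨fun i => ∑ j : Fin r, if τ j = i then b j else 0, hbnonneg τ, hswap τ, rfl⟩
  have hbdd : BddAbove S := by
    refine ⟨L ⟨0, hm⟩ + ∑ j, b j, ?_⟩
    rintro v ⟨x, hx0, hxsum, rfl⟩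
    have h1 : (⨅ i : Fin m, (L i + x i)) ≤ L ⟨0, hm⟩ + x ⟨0, hm⟩ :=
      ciInf_le (Finite.bddBelow_range _) _
    have h2 : x ⟨0, hm⟩ ≤ ∑ i, x i :=
      Finset.single_le_sum (fun i _ => hx0 i) (Finset.mem_univ _)
    rw [hxsum] at h2
    linarith
  constructor
  · intro τ
    exact le_csSup hbdd (hmem τ)
  · obtain ⟨τ, hτ⟩ := greedy_aux m hm s hs r b hb L
    refine ⟨τ, ?_⟩
    set load : Fin m → ℝ := fun i => L i + ∑ j : Fin r, if τ j = i then b j else 0 with hload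
    have hkey : sSup S ≤ (⨅ i, load i) + s := by
      apply csSup_le ⟨_, hmem τ⟩
      rintro v ⟨x, hx0, hxsum, rfl⟩
      by_contra hcon
      push_neg at hcon
      obtain ⟨i0, hi0⟩ := Finite.exists_min load
      have hμ : (⨅ i, load i) = load i0 :=
        le_antisymm (ciInf_le (Finite.bddBelow_range _) _) (le_ciInf hi0)
      have hle : ∀ i ∈ Finset.univ, load i ≤ L i + x i := by
        intro i _
        rcases hτ i with h | h
        · rw [hload]
          simp only [h, add_zero]
          linarith [hx0 i]
        · have hv : (⨅ i : Fin m, (L i + x i)) ≤ L i + x i :=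
            ciInf_le (Finite.bddBelow_range _) _
          exact le_trans h (le_trans hcon.le hv)
      have hstrict : load i0 < L i0 + x i0 := by
        have hv : (⨅ i : Fin m, (L i + x i)) ≤ L i0 + x i0 :=
          ciInf_le (Finite.bddBelow_range _) _
        have : load i0 ≤ (⨅ i, load i) + s := by rw [hμ]; linarith
        linarith
      have hlt : (∑ i, load i) < ∑ i, (L i + x i) :=
        Finset.sum_lt_sum hle ⟨i0, Finset.mem_univ _, hstrict⟩
      have heq : (∑ i, load i) = ∑ i, (L i + x i) := by
        rw [hload]
        simp only [Finset.sum_add_distrib]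
        rw [hswap τ, hxsum]
      linarith
    linarith
end

section
/- Let m ≥ 1 be an integer, ε > 0, s ≥ 0 and T ≥ 0. Let g_1,…,g_r ≥ 0 (sizes of large bags) and let b_1,…,b_t ∈ [0,s] (sizes of small bags) with T/(1+ε) ≤ ∑_{j=1}^t b_j ≤ T. For an assignment σ : {1,…,r} → {1,…,m} of the large bags, let L_σ(i) := ∑_{u : σ(u)=i} g_u, and let F(σ) := max{ min_{1≤i≤m} (L_σ(i) + x_i) : x_1,…,x_m ≥ 0, ∑_{i=1}^m x_i = T }; let F* := max_σ F(σ). Let V denote the maximum, over all assignments of all r+t bags to the m machines, of the minimum machine load. Then F*/(1+ε) − s ≤ V ≤ F*. -/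
open scoped BigOperators

attribute [local instance] Classical.propDecidable

/-- subset extraction -/
lemma subset_sum {t : ℕ} (b : Fin t → ℝ) (s : ℝ) (hs : 0 ≤ s)
    (hb : ∀ j, 0 ≤ b j ∧ b j ≤ s) (A : Finset (Fin t)) :
    ∀ y : ℝ, 0 ≤ y → y ≤ ∑ j ∈ A, b j →
      ∃ S ⊆ A, y - s ≤ ∑ j ∈ S, b j ∧ ∑ j ∈ S, b j ≤ y := by
  induction A using Finset.induction_on with
  | empty =>
    intro y hy hle
    simp only [Finset.sum_empty] at hle
    exact ⟨∅, Finset.Subset.refl _, by simp; linarith [le_antisymm hle hy], by simp; linarith⟩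
  | @insert j A' hj ih =>
    intro y hy hle
    by_cases hys : y ≤ s
    · exact ⟨∅, by simp, by simp; linarith, by simp; linarith⟩
    · by_cases h2 : y ≤ ∑ k ∈ A', b k
      · obtain ⟨S, hS, h1, h2'⟩ := ih y hy h2
        exact ⟨S, hS.trans (Finset.subset_insert _ _), h1, h2'⟩
      · push_neg at h2 hys
        have hbj := hb j
        rw [Finset.sum_insert hj] at hle
        obtain ⟨S', hS', h1, h2'⟩ := ih (y - b j) (by linarith) (by linarith)
        have hjS' : j ∉ S' := fun h => hj (hS' h)
        refine ⟨insert j S', Finset.insert_subset_insert _ hS', ?_, ?_⟩ <;>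
          rw [Finset.sum_insert hjS'] <;> linarith

/-- greedy assignment of small bags to machines -/
lemma greedy_s10 {t : ℕ} (b : Fin t → ℝ) (s : ℝ) (hs : 0 ≤ s)
    (hb : ∀ j, 0 ≤ b j ∧ b j ≤ s) :
    ∀ (n : ℕ) (A : Finset (Fin t)) (y : Fin (n+1) → ℝ), (∀ i, 0 ≤ y i) →
      (∑ i, y i) ≤ ∑ j ∈ A, b j →
      ∃ τ : Fin t → Fin (n+1), ∀ i, y i - s ≤ ∑ j ∈ A.filter (fun j => τ j = i), b j := by
  intro n
  induction n with
  | zero =>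
    intro A y hy hle
    refine ⟨fun _ => 0, fun i => ?_⟩
    have h1 : A.filter (fun j => (0 : Fin 1) = i) = A := by
      apply Finset.filter_true_of_mem
      intro j _; rw [Fin.fin_one_eq_zero i]
    have h2 : y i = ∑ k, y k := by
      rw [Fin.fin_one_eq_zero i]
      simp
    rw [h1, h2] at *
    linarith [h2 ▸ hle]
  | succ n ihn =>
    intro A y hy hle
    set Y := y (Fin.last (n+1)) with hY
    have hYle : Y ≤ ∑ j ∈ A, b j := by
      refine le_trans ?_ hle
      rw [Fin.sum_univ_castSucc]
      have : 0 ≤ ∑ i : Fin (n+1), y i.castSucc :=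
        Finset.sum_nonneg fun i _ => hy _
      linarith
    obtain ⟨S, hSA, hS1, hS2⟩ := subset_sum b s hs hb A Y (hy _) hYle
    have hsum : (∑ i : Fin (n+1), y i.castSucc) ≤ ∑ j ∈ A \ S, b j := by
      rw [Finset.sum_sdiff_eq_sub hSA]
      have := Fin.sum_univ_castSucc (f := y)
      linarith [hle, hS2, this]
    obtain ⟨τ', hτ'⟩ := ihn (A \ S) (fun i => y i.castSucc) (fun i => hy _) hsum
    refine ⟨fun j => if j ∈ S then Fin.last (n+1) else (τ' j).castSucc, fun i => ?_⟩
    rcases Fin.eq_castSucc_or_eq_last i with ⟨i', rfl⟩ | rfl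
    · have hfe : A.filter (fun j => (if j ∈ S then Fin.last (n+1) else (τ' j).castSucc) = i'.castSucc)
          = (A \ S).filter (fun j => τ' j = i') := by
        ext j
        simp only [Finset.mem_filter, Finset.mem_sdiff]
        constructor
        · rintro ⟨hjA, hj⟩
          by_cases hjS : j ∈ S
          · simp [hjS] at hj
            exact absurd hj.symm (Fin.castSucc_lt_last i').ne
          · simp [hjS] at hj
            exact ⟨⟨hjA, hjS⟩, hj⟩
        · rintro ⟨⟨hjA, hjS⟩, hj⟩
          exact ⟨hjA, by simp [hjS, hj]⟩
      rw [hfe]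
      exact hτ' i'
    · have hfe : A.filter (fun j => (if j ∈ S then Fin.last (n+1) else (τ' j).castSucc) = Fin.last (n+1)) = S := by
        ext j
        simp only [Finset.mem_filter]
        constructor
        · rintro ⟨hjA, hj⟩
          by_contra hjS
          simp [hjS] at hj
        · intro hjS
          exact ⟨hSA hjS, by simp [hjS]⟩
      rw [hfe]
      exact hS1

/-- replacing small bags `b_1,…,b_t ∈ [0,s]` of total volume in `[T/(1+ε), T]`
by a fractional sand volume `T` changes the optimal minimum machine load by at most a factor
`1+ε` and an additive `s`: with
`F(σ) = max { min_i (L_σ(i) + x_i) : x ≥ 0, ∑ x_i = T }`, `F* = max_σ F(σ)`, and `V` the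
optimal minimum machine load over all assignments of all `r+t` bags, one has
`F*/(1+ε) − s ≤ V ≤ F*`. -/
theorem stmt10 (m : ℕ) (hm : 0 < m) (ε s T : ℝ) (hε : 0 < ε) (hs : 0 ≤ s) (hT : 0 ≤ T)
    (r t : ℕ) (g : Fin r → ℝ) (hg : ∀ u, 0 ≤ g u)
    (b : Fin t → ℝ) (hb : ∀ j, 0 ≤ b j ∧ b j ≤ s)
    (hbT : T / (1 + ε) ≤ ∑ j, b j) (hbT2 : (∑ j, b j) ≤ T) :
    (⨆ σ : Fin r → Fin m, sSup {v : ℝ | ∃ x : Fin m → ℝ, (∀ i, 0 ≤ x i) ∧ (∑ i, x i) = T ∧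
        v = ⨅ i : Fin m, ((∑ u : Fin r, if σ u = i then g u else 0) + x i)}) / (1 + ε) - s ≤
      optMin (Sum.elim g b) m ∧
    optMin (Sum.elim g b) m ≤
      ⨆ σ : Fin r → Fin m, sSup {v : ℝ | ∃ x : Fin m → ℝ, (∀ i, 0 ≤ x i) ∧ (∑ i, x i) = T ∧
        v = ⨅ i : Fin m, ((∑ u : Fin r, if σ u = i then g u else 0) + x i)} := by
  obtain ⟨n, rfl⟩ : ∃ n, m = n + 1 := ⟨m - 1, (Nat.succ_pred_eq_of_pos hm).symm⟩
  haveI : Nonempty (Fin (n+1)) := ⟨0⟩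
  have hεpos : (0:ℝ) < 1 + ε := by linarith
  have hBnn : (0:ℝ) ≤ ∑ j, b j := Finset.sum_nonneg fun j _ => (hb j).1
  -- nonneg and boundedness facts about loads
  have hLnn : ∀ (σ : Fin r → Fin (n+1)) (i : Fin (n+1)),
      (0:ℝ) ≤ ∑ u : Fin r, if σ u = i then g u else 0 := by
    intro σ i
    exact Finset.sum_nonneg fun u _ => by by_cases h : σ u = i <;> simp [h, hg u]
  have hLle : ∀ (σ : Fin r → Fin (n+1)) (i : Fin (n+1)),
      (∑ u : Fin r, if σ u = i then g u else 0) ≤ ∑ u, g u := by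
    intro σ i
    exact Finset.sum_le_sum fun u _ => by by_cases h : σ u = i <;> simp [h, hg u]
  have hbddB : ∀ (f : Fin (n+1) → ℝ), BddBelow (Set.range f) :=
    fun f => (Set.finite_range f).bddBelow
  -- nonemptiness of the sets
  have hne : ∀ σ : Fin r → Fin (n+1),
      Set.Nonempty {v : ℝ | ∃ x : Fin (n+1) → ℝ, (∀ i, 0 ≤ x i) ∧ (∑ i, x i) = T ∧
        v = ⨅ i : Fin (n+1), ((∑ u : Fin r, if σ u = i then g u else 0) + x i)} := by
    intro σ
    refine ⟨_, fun i => if i = 0 then T else 0, fun i => by positivity, ?_, rfl⟩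
    simp [Finset.sum_ite_eq']
  -- boundedness above of the sets
  have hbdd : ∀ σ : Fin r → Fin (n+1),
      BddAbove {v : ℝ | ∃ x : Fin (n+1) → ℝ, (∀ i, 0 ≤ x i) ∧ (∑ i, x i) = T ∧
        v = ⨅ i : Fin (n+1), ((∑ u : Fin r, if σ u = i then g u else 0) + x i)} := by
    intro σ
    refine ⟨(∑ u, g u) + T, ?_⟩
    rintro v ⟨x, hx0, hxT, rfl⟩
    have h1 := ciInf_le (hbddB (fun i => (∑ u : Fin r, if σ u = i then g u else 0) + x i)) (0 : Fin (n+1))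
    have hx0T : x 0 ≤ T := hxT ▸ Finset.single_le_sum (fun i _ => hx0 i) (Finset.mem_univ 0)
    calc _ ≤ (∑ u : Fin r, if σ u = 0 then g u else 0) + x 0 := h1
      _ ≤ (∑ u, g u) + T := add_le_add (hLle σ 0) hx0T
  constructor
  · -- lower bound : F*/(1+ε) - s ≤ V
    rw [sub_le_iff_le_add, div_le_iff₀ hεpos]
    apply ciSup_le
    intro σ
    apply csSup_le (hne σ)
    rintro v ⟨x, hx0, hxT, rfl⟩
    have hysum : (∑ i, x i / (1+ε)) ≤ ∑ j ∈ Finset.univ, b j := by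
      rw [← Finset.sum_div, hxT]
      simpa using hbT
    obtain ⟨τ, hτ⟩ := greedy_s10 b s hs hb n Finset.univ (fun i => x i / (1+ε))
      (fun i => div_nonneg (hx0 i) hεpos.le) hysum
    set ρ : (Fin r ⊕ Fin t) → Fin (n+1) := Sum.elim σ τ with hρ
    have hload : ∀ i, load (Sum.elim g b) ρ i
        = (∑ u : Fin r, if σ u = i then g u else 0)
          + ∑ j ∈ Finset.univ.filter (fun j => τ j = i), b j := by
      intro i
      rw [load, Fintype.sum_sum_type, Finset.sum_filter]
      rfl
    have hstep : ∀ i, (⨅ i' : Fin (n+1),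
          ((∑ u : Fin r, if σ u = i' then g u else 0) + x i')) / (1+ε) - s
        ≤ load (Sum.elim g b) ρ i := by
      intro i
      have h1 := ciInf_le (hbddB (fun i' => (∑ u : Fin r, if σ u = i' then g u else 0) + x i')) i
      have h2 := hτ i
      have h3 : (⨅ i' : Fin (n+1), ((∑ u : Fin r, if σ u = i' then g u else 0) + x i')) / (1+ε)
          ≤ ((∑ u : Fin r, if σ u = i then g u else 0) + x i) / (1+ε) :=
        (div_le_div_iff_of_pos_right hεpos).mpr h1
      have h4 : ((∑ u : Fin r, if σ u = i then g u else 0) + x i) / (1+ε)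
          ≤ (∑ u : Fin r, if σ u = i then g u else 0) + x i / (1+ε) := by
        rw [add_div]
        have := div_le_self (hLnn σ i) (by linarith : (1:ℝ) ≤ 1 + ε)
        linarith
      rw [hload i]
      linarith
    have h5 : (⨅ i' : Fin (n+1),
          ((∑ u : Fin r, if σ u = i' then g u else 0) + x i')) / (1+ε) - s
        ≤ ⨅ i, load (Sum.elim g b) ρ i := le_ciInf hstep
    have h6 : (⨅ i, load (Sum.elim g b) ρ i) ≤ optMin (Sum.elim g b) (n+1) := by
      unfold optMin
      exact le_ciSup (f := fun ρ' : (Fin r ⊕ Fin t) → Fin (n+1) => ⨅ i, load (Sum.elim g b) ρ' i)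
        (Set.finite_range _).bddAbove ρ
    have h7 := h5.trans h6
    rw [sub_le_iff_le_add, div_le_iff₀ hεpos] at h7
    linarith [h7]
  · -- upper bound : V ≤ F*
    rw [optMin]
    apply ciSup_le
    intro ρ
    set σ : Fin r → Fin (n+1) := fun u => ρ (Sum.inl u) with hσ
    set x : Fin (n+1) → ℝ := fun i =>
      (∑ j : Fin t, if ρ (Sum.inr j) = i then b j else 0)
        + (if i = 0 then T - (∑ j, b j) else 0) with hx
    have hx0 : ∀ i, 0 ≤ x i := by
      intro i
      have h1 : (0:ℝ) ≤ ∑ j : Fin t, if ρ (Sum.inr j) = i then b j else 0 :=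
        Finset.sum_nonneg fun j _ => by by_cases h : ρ (Sum.inr j) = i <;> simp [h, (hb j).1]
      have h2 : (0:ℝ) ≤ if i = 0 then T - (∑ j, b j) else 0 := by
        by_cases h : i = 0 <;> simp [h] ; linarith
      exact add_nonneg h1 h2
    have hxT : (∑ i, x i) = T := by
      rw [hx]
      rw [Finset.sum_add_distrib, Finset.sum_comm]
      simp [Finset.sum_ite_eq, Finset.sum_ite_eq']
    have hmem : (⨅ i : Fin (n+1), ((∑ u : Fin r, if σ u = i then g u else 0) + x i)) ∈
        {v : ℝ | ∃ x : Fin (n+1) → ℝ, (∀ i, 0 ≤ x i) ∧ (∑ i, x i) = T ∧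
          v = ⨅ i : Fin (n+1), ((∑ u : Fin r, if σ u = i then g u else 0) + x i)} :=
      ⟨x, hx0, hxT, rfl⟩
    have hle : (⨅ i, load (Sum.elim g b) ρ i)
        ≤ ⨅ i : Fin (n+1), ((∑ u : Fin r, if σ u = i then g u else 0) + x i) := by
      apply le_ciInf
      intro i
      refine (ciInf_le (hbddB _) i).trans ?_
      rw [load, Fintype.sum_sum_type]
      have h2 : (0:ℝ) ≤ if i = 0 then T - (∑ j, b j) else 0 := by
        by_cases h : i = 0 <;> simp [h] ; linarith
      simp only [hx, Sum.elim_inl, Sum.elim_inr, hσ]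
      linarith
    refine hle.trans ((le_csSup (hbdd σ) hmem).trans ?_)
    exact le_ciSup (f := fun σ' : Fin r → Fin (n+1) =>
      sSup {v : ℝ | ∃ x : Fin (n+1) → ℝ, (∀ i, 0 ≤ x i) ∧ (∑ i, x i) = T ∧
        v = ⨅ i : Fin (n+1), ((∑ u : Fin r, if σ' u = i then g u else 0) + x i)})
      (Set.finite_range _).bddAbove σ
end

section
/- Let β be a partition of a finite job set into bags with sizes p(B) ≥ 0, let m ≥ 1 be an integer, and let v := Opt_min(β, m). Let S be a set of bags of β with |S| < m such that p(B) ≥ v for every B ∈ S. Then there exists a schedule of β on m machines whose minimum machine load equals v and in which every bag of S is assigned to a machine that receives no other bag (in particular, no two bags of S share a machine). -/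
open scoped BigOperators

attribute [local instance] Classical.propDecidable

/-- if each bag in `S` has size at least `v = Opt_min(β, m)` and `|S| < m`,
then there is a schedule on `m` machines whose minimum machine load is exactly `v` and in
which every bag of `S` sits alone on its machine (no other bag shares its machine). -/
theorem stmt13 (Mb : ℕ) (sz : Fin Mb → ℝ) (hsz : ∀ B, 0 ≤ sz B)
    (m : ℕ) (hm : 0 < m) (S : Finset (Fin Mb)) (hScard : S.card < m)
    (hS : ∀ B ∈ S, optMin sz m ≤ sz B) :
    ∃ σ : Fin Mb → Fin m,
      (⨅ i : Fin m, load sz σ i) = optMin sz m ∧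
      ∀ B ∈ S, ∀ B' : Fin Mb, B' ≠ B → σ B' ≠ σ B := by
  classical
  haveI : Nonempty (Fin m) := Fin.pos_iff_nonempty.mp hm
  set v := optMin sz m with hv
  -- an optimal schedule σ₀
  obtain ⟨σ₀, hσ₀⟩ := Finite.exists_max (fun τ : Fin Mb → Fin m => ⨅ i : Fin m, load sz τ i)
  have hopt : (⨅ i : Fin m, load sz σ₀ i) = v := by
    rw [hv]; unfold optMin
    exact le_antisymm (le_ciSup (f := fun τ : Fin Mb → Fin m => ⨅ i : Fin m, load sz τ i) (Set.finite_range _).bddAbove σ₀) (ciSup_le hσ₀)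
  have hload₀ : ∀ i : Fin m, v ≤ load sz σ₀ i := by
    intro i
    rw [← hopt]
    exact ciInf_le (Set.finite_range _).bddBelow i
  -- embed S into the machines
  have hcardS : Fintype.card {x // x ∈ S} ≤ Fintype.card (Fin m) := by
    simpa [Fintype.card_coe] using hScard.le
  obtain ⟨e⟩ := Function.Embedding.nonempty_of_card_le hcardS
  set A : Finset (Fin m) := Finset.univ.map e with hA
  have hAcard : A.card = S.card := by
    simp [hA, Fintype.card_coe]
  -- machines touched by S under σ₀
  set T : Finset (Fin m) := S.image σ₀ with hT
  have hcardAc : Aᶜ.card ≤ Tᶜ.card := by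
    rw [Finset.card_compl, Finset.card_compl]
    refine Nat.sub_le_sub_left ?_ (Fintype.card (Fin m))
    rw [hAcard]
    exact Finset.card_image_le
  have hcardAc' : Fintype.card {x // x ∈ Aᶜ} ≤ Fintype.card {x // x ∈ Tᶜ} := by
    simp only [Fintype.card_coe]
    exact hcardAc
  obtain ⟨w⟩ := Function.Embedding.nonempty_of_card_le hcardAc'
  -- a default machine in Aᶜ
  have hAcne : Aᶜ.Nonempty := by
    rw [← Finset.card_pos, Finset.card_compl, hAcard, Fintype.card_fin]
    omega
  obtain ⟨j₀, hj₀⟩ := hAcne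
  -- the schedule
  set σ : Fin Mb → Fin m := fun B =>
    if hB : B ∈ S then e ⟨B, hB⟩
    else if h : ∃ j : {x // x ∈ Aᶜ}, ((w j : {x // x ∈ Tᶜ}) : Fin m) = σ₀ B then
      (h.choose : Fin m)
    else j₀ with hσdef
  have hmemA : ∀ B (hB : B ∈ S), σ B = e ⟨B, hB⟩ := by
    intro B hB; simp [hσdef, hB]
  have heA : ∀ b : {x // x ∈ S}, (e b : Fin m) ∈ A := by
    intro b; simp [hA]
  have hmemAc : ∀ B, B ∉ S → σ B ∈ Aᶜ := by
    intro B hB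
    simp only [hσdef, hB, dif_neg, not_false_iff]
    split
    · next h => exact h.choose.2
    · exact hj₀
  -- each bag not in S lands in Aᶜ; each machine of the form w j collects its old load
  have hwG : ∀ j : {x // x ∈ Aᶜ}, ∀ B, σ₀ B = ((w j : {x // x ∈ Tᶜ}) : Fin m) → σ B = (j : Fin m) := by
    intro j B hB
    have hBS : B ∉ S := by
      intro hBS
      have : σ₀ B ∈ T := Finset.mem_image_of_mem σ₀ hBS
      rw [hB] at this
      exact (Finset.mem_compl.mp (w j).2) this
    have hex : ∃ j' : {x // x ∈ Aᶜ}, ((w j' : {x // x ∈ Tᶜ}) : Fin m) = σ₀ B := ⟨j, hB.symm⟩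
    have hsp := hex.choose_spec
    have : hex.choose = j := by
      apply w.injective
      apply Subtype.ext
      rw [hsp, hB]
    simp only [hσdef, hBS, dif_neg, not_false_iff, dif_pos hex]
    rw [this]
  -- loads of machines in A
  have hloadA : ∀ b : {x // x ∈ S}, sz b ≤ load sz σ (e b) := by
    intro b
    unfold load
    have : (if σ (b : Fin Mb) = e b then sz (b : Fin Mb) else 0) = sz (b : Fin Mb) := by
      rw [if_pos]
      rw [hmemA b b.2]
    calc sz (b : Fin Mb) = (if σ (b : Fin Mb) = e b then sz (b : Fin Mb) else 0) := this.symm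
    _ ≤ ∑ c : Fin Mb, if σ c = e b then sz c else 0 := by
        refine Finset.single_le_sum (f := fun c => if σ c = e b then sz c else 0)
          (fun c _ => ?_) (Finset.mem_univ _)
        split
        · exact hsz c
        · exact le_rfl
  -- loads of machines in Aᶜ
  have hloadAc : ∀ j : {x // x ∈ Aᶜ}, load sz σ₀ ((w j : {x // x ∈ Tᶜ}) : Fin m) ≤ load sz σ (j : Fin m) := by
    intro j
    unfold load
    apply Finset.sum_le_sum
    intro c _
    by_cases hc : σ₀ c = ((w j : {x // x ∈ Tᶜ}) : Fin m)
    · rw [if_pos hc, if_pos (hwG j c hc)]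
    · rw [if_neg hc]
      split
      · exact hsz c
      · exact le_rfl
  -- all loads are ≥ v
  have hge : ∀ i : Fin m, v ≤ load sz σ i := by
    intro i
    by_cases hi : i ∈ A
    · rw [hA, Finset.mem_map] at hi
      obtain ⟨b, -, hb⟩ := hi
      calc v ≤ sz b := hS b b.2
      _ ≤ load sz σ (e b) := hloadA b
      _ = load sz σ i := by rw [hb]
    · have hi' : i ∈ Aᶜ := Finset.mem_compl.mpr hi
      calc v ≤ load sz σ₀ ((w ⟨i, hi'⟩ : {x // x ∈ Tᶜ}) : Fin m) := hload₀ _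
      _ ≤ load sz σ (⟨i, hi'⟩ : {x // x ∈ Aᶜ}) := hloadAc ⟨i, hi'⟩
      _ = load sz σ i := rfl
  refine ⟨σ, ?_, ?_⟩
  · refine le_antisymm ?_ (le_ciInf hge)
    rw [hv]; unfold optMin
    exact le_ciSup (f := fun τ : Fin Mb → Fin m => ⨅ i : Fin m, load sz τ i) (Set.finite_range _).bddAbove σ
  · intro B hB B' hBB' hcontra
    rw [hmemA B hB] at hcontra
    by_cases hB' : B' ∈ S
    · rw [hmemA B' hB'] at hcontra
      have := e.injective hcontra
      exact hBB' (by simpa using congrArg Subtype.val this)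
    · have h1 := hmemAc B' hB'
      rw [hcontra] at h1
      exact (Finset.mem_compl.mp h1) (heA ⟨B, hB⟩)
end

section
/- Let β be a partition of a finite job set into bags with sizes p(B) ≥ 0, let m ≥ 1 be an integer, and let S be a set of bags of β with |S| < m such that p(B) ≥ Opt_min(β, m) for every B ∈ S. Then Opt_min(β, m) = min{ min_{B∈S} p(B) , Opt_min(β∖S, m−|S|) }, where Opt_min(β∖S, m−|S|) is the optimal minimum machine load obtained by scheduling only the bags of β not in S on m−|S| machines (and min_{B∈S} p(B) := +∞ if S is empty). -/
open scoped BigOperators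

attribute [local instance] Classical.propDecidable

lemma le_optMin {ι : Type*} [Fintype ι] (sz : ι → ℝ) (m : ℕ) (σ : ι → Fin m) :
    (⨅ i : Fin m, load sz σ i) ≤ optMin sz m := by
  rw [optMin]
  exact le_ciSup (f := fun σ : ι → Fin m => ⨅ i : Fin m, load sz σ i)
    (Finite.bddAbove_range _) σ

lemma ciInf_load_le {ι : Type*} [Fintype ι] (sz : ι → ℝ) {m : ℕ} (σ : ι → Fin m) (i : Fin m) :
    (⨅ i : Fin m, load sz σ i) ≤ load sz σ i :=
  ciInf_le (Finite.bddBelow_range _) i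

lemma optMin_attained {ι : Type*} [Fintype ι] (sz : ι → ℝ) {m : ℕ} (hm : 0 < m) :
    ∃ σ : ι → Fin m, optMin sz m = ⨅ i : Fin m, load sz σ i := by
  haveI : Nonempty (Fin m) := ⟨⟨0, hm⟩⟩
  obtain ⟨σ, hσ⟩ := exists_eq_ciSup_of_finite
    (f := fun σ : ι → Fin m => ⨅ i : Fin m, load sz σ i)
  exact ⟨σ, hσ.symm⟩

/-- decoupling identity.  If every bag of `S` has size at least
`Opt_min(β, m)` and `|S| < m`, then
`Opt_min(β, m) = min (min_{B∈S} p(B)) (Opt_min(β∖S, m−|S|))`, where the first term is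
omitted (i.e., taken to be `+∞`) when `S` is empty. -/
theorem stmt14 (Mb : ℕ) (sz : Fin Mb → ℝ) (hsz : ∀ B, 0 ≤ sz B)
    (m : ℕ) (hm : 0 < m) (S : Finset (Fin Mb)) (hScard : S.card < m)
    (hS : ∀ B ∈ S, optMin sz m ≤ sz B) :
    optMin sz m =
      if hne : S.Nonempty then
        min (S.inf' hne sz)
          (optMin (fun B : {B : Fin Mb // B ∉ S} => sz B.1) (m - S.card))
      else
        optMin (fun B : {B : Fin Mb // B ∉ S} => sz B.1) (m - S.card) := by
  set k := m - S.card with hkdef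
  have hk : 0 < k := Nat.sub_pos_of_lt hScard
  haveI : Nonempty (Fin m) := ⟨⟨0, hm⟩⟩
  haveI : Nonempty (Fin k) := ⟨⟨0, hk⟩⟩
  set sz' : {B : Fin Mb // B ∉ S} → ℝ := fun B => sz B.1 with hsz'
  -- Direction 1 : optMin sz m ≤ optMin sz' k
  have dir1 : optMin sz m ≤ optMin sz' k := by
    obtain ⟨σ, hσ⟩ := optMin_attained sz hm
    set T : Finset (Fin m) := S.image σ with hT
    have hTc : k ≤ Tᶜ.card := by
      rw [Finset.card_compl, Fintype.card_fin]
      exact Nat.sub_le_sub_left (Finset.card_image_le) m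
    obtain ⟨U, hUsub, hUcard⟩ := Finset.exists_subset_card_eq hTc
    set u : Fin k → Fin m := fun j => ((U.orderIsoOfFin hUcard) j : Fin m) with hu
    have humem : ∀ j, u j ∈ U := fun j => ((U.orderIsoOfFin hUcard) j).2
    set r : Fin m → Fin k := fun i =>
      if h : i ∈ U then (U.orderIsoOfFin hUcard).symm ⟨i, h⟩ else ⟨0, hk⟩ with hr
    have hru : ∀ j, r (u j) = j := by
      intro j
      simp only [hr, dif_pos (humem j), hu]
      rw [dif_pos ((U.orderIsoOfFin hUcard) j).2]
      exact (U.orderIsoOfFin hUcard).symm_apply_apply j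
    set τ : {B : Fin Mb // B ∉ S} → Fin k := fun B => r (σ B.1) with hτ
    have key : ∀ j, load sz σ (u j) ≤ load sz' τ j := by
      intro j
      have hnotS : ∀ B, σ B = u j → B ∉ S := by
        intro B hB hBS
        have : u j ∈ T := by
          rw [← hB]; exact Finset.mem_image_of_mem σ hBS
        exact (Finset.mem_compl.1 (hUsub (humem j))) this
      have h1 : load sz σ (u j) = ∑ B ∈ Sᶜ, (if σ B = u j then sz B else 0) := by
        rw [load]
        refine (Finset.sum_subset (Finset.subset_univ _) ?_).symm
        intro B _ hB
        rw [Finset.mem_compl, not_not] at hB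
        rw [if_neg (fun h => hnotS B h hB)]
      have h2 : load sz' τ j = ∑ B ∈ Sᶜ, (if r (σ B) = j then sz B else 0) := by
        rw [load, (Finset.sum_subtype Sᶜ (fun x => Finset.mem_compl) _)]
      rw [h1, h2]
      apply Finset.sum_le_sum
      intro B _
      by_cases h : σ B = u j
      · rw [if_pos h, if_pos (by rw [h]; exact hru j)]
      · rw [if_neg h]
        split <;> [exact hsz B; exact le_refl 0]
    rw [hσ]
    refine le_trans (le_ciInf fun j => ?_) (le_optMin sz' k τ)
    exact le_trans (ciInf_load_le sz σ (u j)) (key j)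
  -- Direction 2 : any lower bound on both pieces is ≤ optMin sz m
  have dir2 : ∀ w : ℝ, (∀ B ∈ S, w ≤ sz B) → w ≤ optMin sz' k → w ≤ optMin sz m := by
    intro w hw1 hw2
    obtain ⟨τ, hτ⟩ := optMin_attained sz' hk
    set c := S.card with hc
    have hkc : k + c = m := Nat.sub_add_cancel hScard.le
    set e : Fin k ⊕ Fin c ≃ Fin m := finSumFinEquiv.trans (finCongr hkc) with he
    set s : Fin c ≃o {x // x ∈ S} := S.orderIsoOfFin rfl with hs
    set σ : Fin Mb → Fin m := fun B =>
      if h : B ∈ S then e (Sum.inr (s.symm ⟨B, h⟩)) else e (Sum.inl (τ ⟨B, h⟩)) with hσdef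
    refine le_trans ?_ (le_optMin sz m σ)
    refine le_ciInf fun i => ?_
    obtain ⟨x, rfl⟩ := e.surjective i
    cases x with
    | inl j =>
      have hload : load sz' τ j = load sz σ (e (Sum.inl j)) := by
        have h1 : load sz σ (e (Sum.inl j)) = ∑ B ∈ Sᶜ, (if σ B = e (Sum.inl j) then sz B else 0) := by
          rw [load]
          refine (Finset.sum_subset (Finset.subset_univ _) ?_).symm
          intro B _ hB
          rw [Finset.mem_compl, not_not] at hB
          rw [if_neg]
          rw [hσdef]
          simp only [dif_pos hB]
          intro h
          exact Sum.inr_ne_inl (e.injective h)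
        rw [h1, load, (Finset.sum_subtype Sᶜ (fun x => Finset.mem_compl) _)]
        apply Finset.sum_congr rfl
        intro B _
        have : σ B.1 = e (Sum.inl (τ B)) := by
          rw [hσdef]; simp only [dif_neg B.2]
        simp only [this, EmbeddingLike.apply_eq_iff_eq, Sum.inl.injEq]
        rfl
      calc w ≤ ⨅ i, load sz' τ i := hτ ▸ hw2
        _ ≤ load sz' τ j := ciInf_load_le sz' τ j
        _ = _ := hload
    | inr t =>
      set B0 : Fin Mb := (s t : Fin Mb) with hB0
      have hB0S : B0 ∈ S := (s t).2
      have hσB0 : σ B0 = e (Sum.inr t) := by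
        rw [hσdef]
        simp only [dif_pos hB0S]
        congr 1
        simp [hB0]
      calc w ≤ sz B0 := hw1 B0 hB0S
        _ = (if σ B0 = e (Sum.inr t) then sz B0 else 0) := by rw [if_pos hσB0]
        _ ≤ load sz σ (e (Sum.inr t)) := by
            apply Finset.single_le_sum (f := fun B => if σ B = e (Sum.inr t) then sz B else 0)
            · intro B _
              split <;> [exact hsz B; exact le_refl 0]
            · exact Finset.mem_univ B0
  -- Combine
  split
  · next hne =>
    apply le_antisymm
    · exact le_min (Finset.le_inf' hne _ hS) dir1
    · apply dir2
      · intro B hB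
        exact le_trans (min_le_left _ _) (Finset.inf'_le sz hB)
      · exact min_le_right _ _
  · next hne =>
    apply le_antisymm dir1
    apply dir2
    · intro B hB
      exact absurd ⟨B, hB⟩ hne
    · exact le_refl _
end
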